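/- Let σ : S → A^⊥ ∥ B and τ : T → B^⊥ ∥ C be receptive and courteous pre-strategies (equivalently, strategies). Then the composition τ ⊙ σ : T ⊙ S → A^⊥ ∥ C is receptive and courteous (equivalently, a strategy). -/

import Mathlib

/-- An event structure presented as raw data: a set of events, a causality
relation and a consistency predicate on (finite) sets of events. -/
structure ES where
  Evt : Type
  le : Evt → Evt → Prop
  Con : Set (Set Evt)

namespace ES

/-- Strict causality. -/
def lt (E : ES) (a b : E.Evt) : Prop := E.le a b ∧ a ≠ b

/-- The axioms of event structures: `le` is a partial order, causes `[e]` are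
finite, consistency is a nonempty collection of finite sets, closed under
subsets, containing all singletons, and closed under adding causal
dependencies. -/
def IsES (E : ES) : Prop :=
  (∀ e, E.le e e) ∧
  (∀ a b c, E.le a b → E.le b c → E.le a c) ∧
  (∀ a b, E.le a b → E.le b a → a = b) ∧
  (∀ e, {e' | E.le e' e}.Finite) ∧
  E.Con.Nonempty ∧
  (∀ X ∈ E.Con, X.Finite) ∧
  (∀ e, ({e} : Set E.Evt) ∈ E.Con) ∧
  (∀ X ∈ E.Con, ∀ Y, Y ⊆ X → Y ∈ E.Con) ∧
  (∀ X ∈ E.Con, ∀ e ∈ X, ∀ e', E.le e' e → insert e' X ∈ E.Con)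

/-- A (finite) configuration: a finite, consistent and down-closed set of events. -/
def Config (E : ES) (x : Set E.Evt) : Prop :=
  x.Finite ∧ (∀ Y, Y ⊆ x → Y.Finite → Y ∈ E.Con) ∧
  ∀ e ∈ x, ∀ e', E.le e' e → e' ∈ x

/-- Immediate causality `e ⇢ e'`. -/
def imc (E : ES) (a b : E.Evt) : Prop :=
  E.lt a b ∧ ∀ c, E.le a c → E.le c b → c = a ∨ c = b

/-- Simple parallel composition of event structures. -/
def par (E F : ES) : ES where
  Evt := E.Evt ⊕ F.Evt
  le := fun p q =>
    match p, q with
    | Sum.inl a, Sum.inl b => E.le a b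
    | Sum.inr a, Sum.inr b => F.le a b
    | _, _ => False
  Con := {X | Sum.inl ⁻¹' X ∈ E.Con ∧ Sum.inr ⁻¹' X ∈ F.Con}

/-- Projection (hiding): restrict an event structure to a subset `V` of events. -/
def proj (E : ES) (V : Set E.Evt) : ES where
  Evt := ↥V
  le := fun a b => E.le a.val b.val
  Con := {X | Subtype.val '' X ∈ E.Con}

end ES

/-- A (total) map of event structures: preserves configurations and is
injective on each configuration. -/
def IsMap (E F : ES) (f : E.Evt → F.Evt) : Prop :=
  (∀ x, E.Config x → F.Config (f '' x)) ∧ ∀ x, E.Config x → Set.InjOn f x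
/-- An event structure with polarities (`true` = positive/Player,
`false` = negative/Opponent). -/
structure ESP extends ES where
  pol : Evt → Bool

namespace ESP

/-- The dual game: polarities reversed. -/
def dual (A : ESP) : ESP where
  toES := A.toES
  pol := fun a => !A.pol a

/-- Simple parallel composition of games. -/
def par (A B : ESP) : ESP where
  toES := A.toES.par B.toES
  pol := Sum.elim A.pol B.pol

end ESP

/-- A pre-strategy on the game `A`: a polarity-preserving map of event
structures `σ : S → A`. -/
def IsPreStrategy (S A : ESP) (σ : S.Evt → A.Evt) : Prop :=
  IsMap S.toES A.toES σ ∧ ∀ s, A.pol (σ s) = S.pol s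

/-- `polExt pol b x y` means `x ⊆ y` and all events of `y \ x` have polarity `b`;
so `polExt pol true x y` is `x ⊆⁺ y` and `polExt pol false x y` is `x ⊆⁻ y`. -/
def polExt {α : Type} (pol : α → Bool) (b : Bool) (x y : Set α) : Prop :=
  x ⊆ y ∧ ∀ a ∈ y, a ∉ x → pol a = b

/-- The Scott order: `x ⊑ y` iff `x ⊇⁻ (x ∩ y) ⊆⁺ y`. -/
def scottLE {α : Type} (pol : α → Bool) (x y : Set α) : Prop :=
  polExt pol false (x ∩ y) x ∧ polExt pol true (x ∩ y) y

/-- Courtesy: immediate causal links other than `− ⇢ +` are sent to immediate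
causal links of the game. -/
def Courteous (S A : ESP) (σ : S.Evt → A.Evt) : Prop :=
  ∀ s s', S.toES.imc s s' → (S.pol s, S.pol s') ≠ (false, true) →
    A.toES.imc (σ s) (σ s')

/-- Receptivity: every negative extension of `σ x` in the game is matched by a
unique extension of `x`. -/
def Receptive (S A : ESP) (σ : S.Evt → A.Evt) : Prop :=
  ∀ x, S.toES.Config x → ∀ a, A.pol a = false → a ∉ σ '' x →
    A.toES.Config (insert a (σ '' x)) →
    ∃! s, s ∉ x ∧ S.toES.Config (insert s x) ∧ σ s = a
/-- The generating relation of copycat causality on `A^⊥ ∥ A`: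
the causality of `A^⊥ ∥ A` together with the links from each negative
occurrence to the corresponding positive occurrence on the other side. -/
def ccGen (A : ESP) : (A.Evt ⊕ A.Evt) → (A.Evt ⊕ A.Evt) → Prop :=
  fun p q => (A.dual.par A).le p q ∨
    (∃ a, A.pol a = true ∧ p = Sum.inl a ∧ q = Sum.inr a) ∨
    (∃ a, A.pol a = false ∧ p = Sum.inr a ∧ q = Sum.inl a)

/-- The copycat structure `CC_A` on the game `A`. -/
def CC (A : ESP) : ESP where
  Evt := A.Evt ⊕ A.Evt
  le := Relation.ReflTransGen (ccGen A)
  Con := {X | {e | ∃ e' ∈ X, Relation.ReflTransGen (ccGen A) e e'} ∈ (A.dual.par A).Con}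
  pol := (A.dual.par A).pol
/-- The relation `◁` generating the order on the graph `G` of a bijection:
`p ◁ q` when both are in `G` and `p.1 <_S q.1` or `p.2 <_T q.2`. -/
def gRel (S T : ES) (G : Set (S.Evt × T.Evt)) :
    (S.Evt × T.Evt) → (S.Evt × T.Evt) → Prop :=
  fun p q => p ∈ G ∧ q ∈ G ∧ (S.lt p.1 q.1 ∨ T.lt p.2 q.2)

/-- The graph `G` is secured: the reflexive-transitive closure of `◁` on `G`
is antisymmetric (hence a partial order). -/
def SecuredOn (S T : ES) (G : Set (S.Evt × T.Evt)) : Prop :=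
  ∀ p q, Relation.ReflTransGen (gRel S T G) p q →
    Relation.ReflTransGen (gRel S T G) q p → p = q

/-- `G` is (the graph of) a secured bijection `φ : x ≃ σ x = τ y ≃ y` between
configurations `x ∈ C(S)` and `y ∈ C(T)`, an element of `SB(σ, τ)`. -/
def IsSecBij (S T A : ES) (σ : S.Evt → A.Evt) (τ : T.Evt → A.Evt)
    (G : Set (S.Evt × T.Evt)) : Prop :=
  S.Config (Prod.fst '' G) ∧ T.Config (Prod.snd '' G) ∧
  (∀ p ∈ G, σ p.1 = τ p.2) ∧
  (∀ s ∈ Prod.fst '' G, ∀ t ∈ Prod.snd '' G, σ s = τ t → (s, t) ∈ G) ∧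
  σ '' (Prod.fst '' G) = τ '' (Prod.snd '' G) ∧
  SecuredOn S T G

/-- `G` has a top (greatest) element for the induced order. -/
def IsPrime (S T : ES) (G : Set (S.Evt × T.Evt)) : Prop :=
  ∃ p ∈ G, ∀ q ∈ G, Relation.ReflTransGen (gRel S T G) q p

/-- The interaction `S ∧ T` of `σ : S → A` and `τ : T → A`: events are the
prime secured bijections, causality is inclusion of graphs, and a finite set
of events is consistent when the union of their graphs is a secured bijection. -/
def Interaction (S T A : ES) (σ : S.Evt → A.Evt) (τ : T.Evt → A.Evt) : ES where
  Evt := {G : Set (S.Evt × T.Evt) // IsSecBij S T A σ τ G ∧ IsPrime S T G}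
  le := fun G G' => G.val ⊆ G'.val
  Con := {X | X.Finite ∧ IsSecBij S T A σ τ (⋃ G ∈ X, G.val)}
/-- The game `A ∥ B ∥ C` (as a plain event structure). -/
def gameABC (A B C : ESP) : ES := (A.toES.par B.toES).par C.toES

/-- `σ ∥ id_C : S ∥ C → A ∥ B ∥ C`. -/
def lmap (A B C S : ESP) (σ : S.Evt → A.Evt ⊕ B.Evt) :
    (S.Evt ⊕ C.Evt) → ((A.Evt ⊕ B.Evt) ⊕ C.Evt) := Sum.map σ id

/-- `id_A ∥ τ : A ∥ T → A ∥ B ∥ C`. -/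
def rmap (A B C T : ESP) (τ : T.Evt → B.Evt ⊕ C.Evt) :
    (A.Evt ⊕ T.Evt) → ((A.Evt ⊕ B.Evt) ⊕ C.Evt) :=
  fun p => match p with
  | Sum.inl a => Sum.inl (Sum.inl a)
  | Sum.inr t => Sum.elim (fun b => Sum.inl (Sum.inr b)) Sum.inr (τ t)

/-- The interaction `T ⊛ S` of `σ : S → A^⊥ ∥ B` and `τ : T → B^⊥ ∥ C`:
the pullback of `σ ∥ id_C` and `id_A ∥ τ` over `A ∥ B ∥ C` (polarities
ignored). -/
def compInterES (A B C S T : ESP) (σ : S.Evt → A.Evt ⊕ B.Evt)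
    (τ : T.Evt → B.Evt ⊕ C.Evt) : ES :=
  Interaction (S.toES.par C.toES) (A.toES.par T.toES) (gameABC A B C)
    (lmap A B C S σ) (rmap A B C T τ)

/-- Visibility of an event of `T ⊛ S`: its top synchronised pair is sent to
`A` or `C` by `τ ⊛ σ`. -/
def compVis (A B C S T : ESP) (σ : S.Evt → A.Evt ⊕ B.Evt)
    (τ : T.Evt → B.Evt ⊕ C.Evt) (G : (compInterES A B C S T σ τ).Evt) : Prop :=
  ∃ p ∈ G.val,
    (∀ q ∈ G.val, Relation.ReflTransGen
      (gRel (S.toES.par C.toES) (A.toES.par T.toES) G.val) q p) ∧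
    ∃ e : A.Evt ⊕ C.Evt, lmap A B C S σ p.1 = Sum.map Sum.inl id e

/-- The composition `T ⊙ S`: the projection of `T ⊛ S` to its visible
events. -/
def compES (A B C S T : ESP) (σ : S.Evt → A.Evt ⊕ B.Evt)
    (τ : T.Evt → B.Evt ⊕ C.Evt) : ES :=
  (compInterES A B C S T σ τ).proj {G | compVis A B C S T σ τ G}

/-- The labelling map `τ ⊙ σ : T ⊙ S → A^⊥ ∥ C` of the composition. -/
noncomputable def compLabel (A B C S T : ESP) (σ : S.Evt → A.Evt ⊕ B.Evt)
    (τ : T.Evt → B.Evt ⊕ C.Evt) (G : (compES A B C S T σ τ).Evt) :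
    A.Evt ⊕ C.Evt :=
  (show compVis A B C S T σ τ G.val from G.prop).choose_spec.2.2.choose

/-- The composition `T ⊙ S` as an esp, with polarities inherited from
`A^⊥ ∥ C`. -/
noncomputable def compESP (A B C S T : ESP) (σ : S.Evt → A.Evt ⊕ B.Evt)
    (τ : T.Evt → B.Evt ⊕ C.Evt) : ESP where
  toES := compES A B C S T σ τ
  pol := fun G => (A.dual.par C).pol (compLabel A B C S T σ τ G)
namespace CompAux

open Relation Set Sum

/-! ### Generic order lemmas -/

theorem finset_exists_maximal {α : Type} (r : α → α → Prop)
    (htr : ∀ a b c, r a b → r b c → r a c)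
    (han : ∀ a b, r a b → r b a → a = b)
    (t : Finset α) (hne : t.Nonempty) :
    ∃ a ∈ t, ∀ b ∈ t, r a b → a = b := by
  classical
  induction t using Finset.induction_on with
  | empty => exact absurd hne (by simp)
  | @insert x t hx ih =>
    rcases t.eq_empty_or_nonempty with rfl | htne
    · refine ⟨x, by simp, ?_⟩
      intro b hb _
      simpa using (Finset.mem_singleton.1 (by simpa using hb)).symm
    · obtain ⟨a, ha, hmax⟩ := ih htne
      by_cases hax : r a x
      · refine ⟨x, Finset.mem_insert_self _ _, ?_⟩
        intro b hb hxb
        rcases Finset.mem_insert.1 hb with rfl | hb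
        · rfl
        · have hab : a = b := hmax b hb (htr _ _ _ hax hxb)
          subst hab
          exact (han _ _ hxb hax)
      · refine ⟨a, Finset.mem_insert_of_mem ha, ?_⟩
        intro b hb hab
        rcases Finset.mem_insert.1 hb with rfl | hb
        · exact absurd hab hax
        · exact hmax b hb hab

theorem set_exists_maximal {α : Type} (r : α → α → Prop)
    (htr : ∀ a b c, r a b → r b c → r a c)
    (han : ∀ a b, r a b → r b a → a = b)
    (s : Set α) (hfin : s.Finite) (hne : s.Nonempty) :
    ∃ a ∈ s, ∀ b ∈ s, r a b → a = b := by
  classical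
  obtain ⟨a, ha, h⟩ := finset_exists_maximal r htr han hfin.toFinset
    (by simpa [Set.Finite.toFinset] using hne)
  exact ⟨a, by simpa using ha, fun b hb => h b (by simpa using hb)⟩

/-! ### Immediate causality chains -/

theorem le_imc_of_lt {E : ES} (hE : E.IsES) {a b : E.Evt} (h : E.lt a b) :
    ∃ u, E.le a u ∧ E.imc u b := by
  obtain ⟨hrefl, htr, han, hfin, -⟩ := hE
  set M : Set E.Evt := {u | E.le a u ∧ E.lt u b} with hM
  have hMfin : M.Finite := (hfin b).subset (fun u hu => hu.2.1)
  have hMne : M.Nonempty := ⟨a, hrefl a, h⟩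
  obtain ⟨u, hu, hmax⟩ := set_exists_maximal E.le htr han M hMfin hMne
  refine ⟨u, hu.1, hu.2, ?_⟩
  intro c huc hcb
  by_cases hcbeq : c = b
  · exact Or.inr hcbeq
  · exact Or.inl ((hmax c ⟨htr _ _ _ hu.1 huc, hcb, hcbeq⟩ huc).symm)

theorem imc_le_of_lt {E : ES} (hE : E.IsES) {a b : E.Evt} (h : E.lt a b) :
    ∃ v, E.imc a v ∧ E.le v b := by
  obtain ⟨hrefl, htr, han, hfin, -⟩ := hE
  set M : Set E.Evt := {v | E.lt a v ∧ E.le v b} with hM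
  have hMfin : M.Finite := (hfin b).subset (fun u hu => hu.2)
  have hMne : M.Nonempty := ⟨b, h, hrefl b⟩
  obtain ⟨v, hv, hmin⟩ := set_exists_maximal (fun p q => E.le q p)
    (fun a b c h1 h2 => htr _ _ _ h2 h1) (fun a b h1 h2 => han _ _ h2 h1)
    M hMfin hMne
  refine ⟨v, ⟨hv.1, ?_⟩, hv.2⟩
  intro c hac hcv
  by_cases hca : c = a
  · exact Or.inl hca
  · exact Or.inr ((hmin c ⟨⟨hac, fun he => hca he.symm⟩, htr _ _ _ hcv hv.2⟩ hcv).symm)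

end CompAux
namespace CompAux

open Relation Set Sum

theorem par_le_ll {E F : ES} {a b : E.Evt} :
    (E.par F).le (Sum.inl a) (Sum.inl b) ↔ E.le a b := Iff.rfl

theorem par_le_rr {E F : ES} {a b : F.Evt} :
    (E.par F).le (Sum.inr a) (Sum.inr b) ↔ F.le a b := Iff.rfl

theorem par_le_lr {E F : ES} {a : E.Evt} {b : F.Evt} :
    ¬ (E.par F).le (Sum.inl a) (Sum.inr b) := fun h => h

theorem par_le_rl {E F : ES} {a : F.Evt} {b : E.Evt} :
    ¬ (E.par F).le (Sum.inr a) (Sum.inl b) := fun h => h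

theorem config_par_inl {E F : ES} {x : Set (E.Evt ⊕ F.Evt)}
    (h : (E.par F).Config x) : E.Config (Sum.inl ⁻¹' x) := by
  obtain ⟨hfin, hcon, hdcl⟩ := h
  refine ⟨hfin.preimage (Sum.inl_injective.injOn), ?_, ?_⟩
  · intro Y hY hYfin
    have h1 : (Sum.inl '' Y : Set (E.Evt ⊕ F.Evt)) ⊆ x := by
      rintro - ⟨e, he, rfl⟩; exact hY he
    have h2 := hcon _ h1 (hYfin.image _)
    have h3 : Sum.inl ⁻¹' (Sum.inl '' Y : Set (E.Evt ⊕ F.Evt)) = Y :=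
      Set.preimage_image_eq _ Sum.inl_injective
    exact h3 ▸ h2.1
  · intro e he e' hle
    exact hdcl (Sum.inl e) he (Sum.inl e') hle

theorem config_par_inr {E F : ES} {x : Set (E.Evt ⊕ F.Evt)}
    (h : (E.par F).Config x) : F.Config (Sum.inr ⁻¹' x) := by
  obtain ⟨hfin, hcon, hdcl⟩ := h
  refine ⟨hfin.preimage (Sum.inr_injective.injOn), ?_, ?_⟩
  · intro Y hY hYfin
    have h1 : (Sum.inr '' Y : Set (E.Evt ⊕ F.Evt)) ⊆ x := by
      rintro - ⟨e, he, rfl⟩; exact hY he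
    have h2 := hcon _ h1 (hYfin.image _)
    have h3 : Sum.inr ⁻¹' (Sum.inr '' Y : Set (E.Evt ⊕ F.Evt)) = Y :=
      Set.preimage_image_eq _ Sum.inr_injective
    exact h3 ▸ h2.2
  · intro e he e' hle
    exact hdcl (Sum.inr e) he (Sum.inr e') hle

theorem config_par_mk {E F : ES} {x : Set (E.Evt ⊕ F.Evt)}
    (h1 : E.Config (Sum.inl ⁻¹' x)) (h2 : F.Config (Sum.inr ⁻¹' x)) :
    (E.par F).Config x := by
  have hxeq : x ⊆ (Sum.inl '' (Sum.inl ⁻¹' x)) ∪ (Sum.inr '' (Sum.inr ⁻¹' x)) := by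
    intro e he
    cases e with
    | inl a => exact Or.inl ⟨a, he, rfl⟩
    | inr b => exact Or.inr ⟨b, he, rfl⟩
  refine ⟨((h1.1.image _).union (h2.1.image _)).subset hxeq, ?_, ?_⟩
  · intro Y hY hYfin
    constructor
    · exact h1.2.1 _ (fun e he => hY he) (hYfin.preimage (Sum.inl_injective.injOn))
    · exact h2.2.1 _ (fun e he => hY he) (hYfin.preimage (Sum.inr_injective.injOn))
  · intro e he e' hle
    cases e with
    | inl a =>
      cases e' with
      | inl a' => exact h1.2.2 a he a' hle
      | inr b' => exact absurd hle par_le_rl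
    | inr b =>
      cases e' with
      | inl a' => exact absurd hle par_le_lr
      | inr b' => exact h2.2.2 b he b' hle

theorem con_par_mk {E F : ES} {Y : Set (E.Evt ⊕ F.Evt)}
    (h1 : Sum.inl ⁻¹' Y ∈ E.Con) (h2 : Sum.inr ⁻¹' Y ∈ F.Con) :
    Y ∈ (E.par F).Con := ⟨h1, h2⟩

/-- In a par, `imc` on the left component. -/
theorem par_imc_ll {E F : ES} {a b : E.Evt}
    (h : (E.par F).imc (Sum.inl a) (Sum.inl b)) : E.imc a b := by
  obtain ⟨⟨hle, hne⟩, himm⟩ := h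
  refine ⟨⟨hle, fun he => hne (by rw [he])⟩, ?_⟩
  intro c hac hcb
  rcases himm (Sum.inl c) hac hcb with h | h
  · exact Or.inl (Sum.inl_injective h)
  · exact Or.inr (Sum.inl_injective h)

theorem par_imc_rr {E F : ES} {a b : F.Evt}
    (h : (E.par F).imc (Sum.inr a) (Sum.inr b)) : F.imc a b := by
  obtain ⟨⟨hle, hne⟩, himm⟩ := h
  refine ⟨⟨hle, fun he => hne (by rw [he])⟩, ?_⟩
  intro c hac hcb
  rcases himm (Sum.inr c) hac hcb with h | h
  · exact Or.inl (Sum.inr_injective h)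
  · exact Or.inr (Sum.inr_injective h)

/-- An `imc` in a par starting on the left stays on the left. -/
theorem par_imc_inl {E F : ES} {a : E.Evt} {q : E.Evt ⊕ F.Evt}
    (h : (E.par F).imc (Sum.inl a) q) : ∃ b, q = Sum.inl b ∧ E.imc a b := by
  cases q with
  | inl b => exact ⟨b, rfl, par_imc_ll h⟩
  | inr b => exact absurd h.1.1 par_le_lr

theorem par_imc_inr {E F : ES} {a : F.Evt} {q : E.Evt ⊕ F.Evt}
    (h : (E.par F).imc (Sum.inr a) q) : ∃ b, q = Sum.inr b ∧ F.imc a b := by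
  cases q with
  | inl b => exact absurd h.1.1 par_le_rl
  | inr b => exact ⟨b, rfl, par_imc_rr h⟩

theorem par_imc_inl' {E F : ES} {a : E.Evt} {q : E.Evt ⊕ F.Evt}
    (h : (E.par F).imc q (Sum.inl a)) : ∃ b, q = Sum.inl b ∧ E.imc b a := by
  cases q with
  | inl b => exact ⟨b, rfl, par_imc_ll h⟩
  | inr b => exact absurd h.1.1 par_le_rl

theorem par_imc_inr' {E F : ES} {a : F.Evt} {q : E.Evt ⊕ F.Evt}
    (h : (E.par F).imc q (Sum.inr a)) : ∃ b, q = Sum.inr b ∧ F.imc b a := by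
  cases q with
  | inl b => exact absurd h.1.1 par_le_lr
  | inr b => exact ⟨b, rfl, par_imc_rr h⟩

/-- `imc` transfers into a par (left). -/
theorem par_imc_of_ll {E F : ES} {a b : E.Evt} (h : E.imc a b) :
    (E.par F).imc (Sum.inl a) (Sum.inl b) := by
  refine ⟨⟨h.1.1, fun he => h.1.2 (Sum.inl_injective he)⟩, ?_⟩
  intro c hac hcb
  cases c with
  | inl c' =>
    rcases h.2 c' hac hcb with rfl | rfl
    · exact Or.inl rfl
    · exact Or.inr rfl
  | inr c' => exact absurd hac par_le_lr

theorem par_imc_of_rr {E F : ES} {a b : F.Evt} (h : F.imc a b) :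
    (E.par F).imc (Sum.inr a) (Sum.inr b) := by
  refine ⟨⟨h.1.1, fun he => h.1.2 (Sum.inr_injective he)⟩, ?_⟩
  intro c hac hcb
  cases c with
  | inl c' => exact absurd hac par_le_rl
  | inr c' =>
    rcases h.2 c' hac hcb with rfl | rfl
    · exact Or.inl rfl
    · exact Or.inr rfl

end CompAux
namespace CompAux

open Relation Set Sum

section Core

variable {A B C S T : ESP} {σ : S.Evt → A.Evt ⊕ B.Evt} {τ : T.Evt → B.Evt ⊕ C.Evt}

/-- Shorthand for points of the interaction. -/
abbrev IPt (A C S T : ESP) : Type := (S.Evt ⊕ C.Evt) × (A.Evt ⊕ T.Evt)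

/-- `W` is a secured bijection for the interaction data. -/
abbrev Good (A B C S T : ESP) (σ : S.Evt → A.Evt ⊕ B.Evt)
    (τ : T.Evt → B.Evt ⊕ C.Evt) (W : Set (IPt A C S T)) : Prop :=
  IsSecBij (S.toES.par C.toES) (A.toES.par T.toES) (gameABC A B C)
    (lmap A B C S σ) (rmap A B C T τ) W

/-- The generating relation of an interaction graph. -/
abbrev IRel {A C S T : ESP} (W : Set (IPt A C S T)) : IPt A C S T → IPt A C S T → Prop :=
  gRel (S.toES.par C.toES) (A.toES.par T.toES) W

theorem map_inl_id_inj {e e' : A.Evt ⊕ C.Evt}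
    (h : (Sum.map Sum.inl id e : (A.Evt ⊕ B.Evt) ⊕ C.Evt) = Sum.map Sum.inl id e') :
    e = e' := by
  cases e <;> cases e' <;> simp_all [Sum.map]

/-- Shape analysis of a synchronised pair. -/
theorem shape {q : IPt A C S T}
    (h : lmap A B C S σ q.1 = rmap A B C T τ q.2) :
    (∃ s a, q.1 = Sum.inl s ∧ q.2 = Sum.inl a ∧ σ s = Sum.inl a) ∨
    (∃ s t b, q.1 = Sum.inl s ∧ q.2 = Sum.inr t ∧ σ s = Sum.inr b ∧ τ t = Sum.inl b) ∨
    (∃ c t, q.1 = Sum.inr c ∧ q.2 = Sum.inr t ∧ τ t = Sum.inr c) := by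
  obtain ⟨q1, q2⟩ := q
  cases q1 with
  | inl s =>
    cases hs : σ s with
    | inl a =>
      cases q2 with
      | inl a' =>
        left
        refine ⟨s, a', rfl, rfl, ?_⟩
        simp only [lmap, rmap, Sum.map, Sum.elim_inl, Sum.elim_inr,
          Function.comp, hs] at h
        rw [hs]; exact congrArg Sum.inl (Sum.inl_injective (Sum.inl_injective h))
      | inr t =>
        cases ht : τ t with
        | inl b => simp [lmap, rmap, Sum.map, Function.comp, hs, ht] at h
        | inr c => simp [lmap, rmap, Sum.map, Function.comp, hs, ht] at h
    | inr b =>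
      cases q2 with
      | inl a' => simp [lmap, rmap, Sum.map, Function.comp, hs] at h
      | inr t =>
        cases ht : τ t with
        | inl b' =>
          right; left
          refine ⟨s, t, b, rfl, rfl, hs, ?_⟩
          simp only [lmap, rmap, Sum.map, Sum.elim_inl, Sum.elim_inr,
            Function.comp, hs, ht] at h
          rw [ht]
          exact congrArg Sum.inl (Sum.inr_injective (Sum.inl_injective h)).symm
        | inr c => simp [lmap, rmap, Sum.map, Function.comp, hs, ht] at h
  | inr c =>
    cases q2 with
    | inl a' => simp [lmap, rmap, Sum.map, Function.comp] at h
    | inr t =>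
      cases ht : τ t with
      | inl b => simp [lmap, rmap, Sum.map, ht] at h
      | inr c' =>
        right; right
        refine ⟨c, t, rfl, rfl, ?_⟩
        simp only [lmap, rmap, Sum.map, Sum.elim_inl, Sum.elim_inr,
          Function.comp, ht] at h
        rw [ht]
        exact congrArg Sum.inr (Sum.inr_injective h).symm

theorem lmap_injOn (hσ : IsPreStrategy S (A.dual.par B) σ)
    {z : Set (S.Evt ⊕ C.Evt)} (hz : (S.toES.par C.toES).Config z) :
    ∀ p ∈ z, ∀ q ∈ z, lmap A B C S σ p = lmap A B C S σ q → p = q := by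
  intro p hp q hq h
  cases p with
  | inl s =>
    cases q with
    | inl s' =>
      simp only [lmap, Sum.map, Sum.elim_inl, Function.comp] at h
      have := hσ.1.2 _ (config_par_inl hz) hp hq (Sum.inl_injective h)
      rw [this]
    | inr c => simp [lmap, Sum.map, Function.comp] at h
  | inr c =>
    cases q with
    | inl s => simp [lmap, Sum.map, Function.comp] at h
    | inr c' =>
      simp only [lmap, Sum.map, Sum.elim_inr, Function.comp, id] at h
      rw [Sum.inr_injective h]

theorem rmap_injOn (hτ : IsPreStrategy T (B.dual.par C) τ)
    {y : Set (A.Evt ⊕ T.Evt)} (hy : (A.toES.par T.toES).Config y) :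
    ∀ p ∈ y, ∀ q ∈ y, rmap A B C T τ p = rmap A B C T τ q → p = q := by
  intro p hp q hq h
  cases p with
  | inl a =>
    cases q with
    | inl a' => simp only [rmap] at h
                rw [Sum.inl_injective (Sum.inl_injective h)]
    | inr t =>
      cases ht : τ t with
      | inl b => simp [rmap, ht] at h
      | inr c => simp [rmap, ht] at h
  | inr t =>
    cases q with
    | inl a =>
      cases ht : τ t with
      | inl b => simp [rmap, ht] at h
      | inr c => simp [rmap, ht] at h
    | inr t' =>
      cases ht : τ t with
      | inl b =>
        cases ht' : τ t' with
        | inl b' =>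
          simp only [rmap, ht, ht', Sum.elim_inl] at h
          have hbb := Sum.inr_injective (Sum.inl_injective h)
          have : τ t = τ t' := by rw [ht, ht', hbb]
          rw [hτ.1.2 _ (config_par_inr hy) hp hq this]
        | inr c' => simp [rmap, ht, ht'] at h
      | inr c =>
        cases ht' : τ t' with
        | inl b' => simp [rmap, ht, ht'] at h
        | inr c' =>
          simp only [rmap, ht, ht', Sum.elim_inr] at h
          have : τ t = τ t' := by rw [ht, ht', Sum.inr_injective h]
          rw [hτ.1.2 _ (config_par_inr hy) hp hq this]

theorem good_fst_inj (hτ : IsPreStrategy T (B.dual.par C) τ)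
    {W : Set (IPt A C S T)} (hW : Good A B C S T σ τ W) :
    ∀ p ∈ W, ∀ q ∈ W, p.1 = q.1 → p = q := by
  intro p hp q hq h
  have h1 := hW.2.2.1 p hp
  have h2 := hW.2.2.1 q hq
  rw [h] at h1
  have := rmap_injOn hτ hW.2.1 p.2 ⟨p, hp, rfl⟩ q.2 ⟨q, hq, rfl⟩ (h1 ▸ h2 ▸ rfl)
  exact Prod.ext h this

theorem good_snd_inj (hσ : IsPreStrategy S (A.dual.par B) σ)
    {W : Set (IPt A C S T)} (hW : Good A B C S T σ τ W) :
    ∀ p ∈ W, ∀ q ∈ W, p.2 = q.2 → p = q := by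
  intro p hp q hq h
  have h1 := hW.2.2.1 p hp
  have h2 := hW.2.2.1 q hq
  rw [h] at h1
  have := lmap_injOn hσ hW.1 p.1 ⟨p, hp, rfl⟩ q.1 ⟨q, hq, rfl⟩ (by rw [h1, h2])
  exact Prod.ext this h

/-- `D` is a down-closed subset of `W`. -/
def Dcl (W D : Set (IPt A C S T)) : Prop :=
  D ⊆ W ∧ ∀ p q, IRel W p q → q ∈ D → p ∈ D

theorem rtg_mono {W D : Set (IPt A C S T)} (h : D ⊆ W) {p q}
    (hr : Relation.ReflTransGen (IRel D) p q) :
    Relation.ReflTransGen (IRel W) p q :=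
  Relation.ReflTransGen.mono (p := IRel W) (fun _ _ hh => ⟨h hh.1, h hh.2.1, hh.2.2⟩) _ _ hr

theorem dcl_chain {W D : Set (IPt A C S T)} (hD : Dcl W D) {p q}
    (hq : q ∈ D) (h : Relation.ReflTransGen (IRel W) p q) :
    p ∈ D ∧ Relation.ReflTransGen (IRel D) p q := by
  induction h using Relation.ReflTransGen.head_induction_on with
  | refl => exact ⟨hq, Relation.ReflTransGen.refl⟩
  | head hstep _ ih =>
    obtain ⟨hr, hchain⟩ := ih
    have hp := hD.2 _ _ hstep hr
    exact ⟨hp, Relation.ReflTransGen.head ⟨hp, hr, hstep.2.2⟩ hchain⟩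

theorem dcl_union {W : Set (IPt A C S T)} {I : Type*} {f : I → Set (IPt A C S T)}
    {s : Set I} (h : ∀ i ∈ s, Dcl W (f i)) : Dcl W (⋃ i ∈ s, f i) := by
  constructor
  · intro p hp
    obtain ⟨i, hi, hpi⟩ := by simpa using hp
    exact (h i hi).1 hpi
  · intro p q hpq hq
    obtain ⟨i, hi, hqi⟩ := by simpa using hq
    simp only [Set.mem_iUnion]
    exact ⟨i, hi, (h i hi).2 _ _ hpq hqi⟩

theorem secured_subset {W D : Set (IPt A C S T)}
    (hW : SecuredOn (S.toES.par C.toES) (A.toES.par T.toES) W) (h : D ⊆ W) :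
    SecuredOn (S.toES.par C.toES) (A.toES.par T.toES) D :=
  fun p q h1 h2 => hW p q (rtg_mono h h1) (rtg_mono h h2)

/-- A down-closed subset of a secured bijection is a secured bijection. -/
theorem good_of_dcl (hσ : IsPreStrategy S (A.dual.par B) σ)
    (hτ : IsPreStrategy T (B.dual.par C) τ)
    {W D : Set (IPt A C S T)} (hW : Good A B C S T σ τ W) (hD : Dcl W D) :
    Good A B C S T σ τ D := by
  obtain ⟨hc1, hc2, hc3, hc4, hc5, hc6⟩ := hW
  have hsub := hD.1
  have hfstcfg : (S.toES.par C.toES).Config (Prod.fst '' D) := by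
    refine ⟨hc1.1.subset (Set.image_mono hsub), ?_, ?_⟩
    · intro Y hY hYfin
      exact hc1.2.1 Y (hY.trans (Set.image_mono hsub)) hYfin
    · rintro e ⟨r, hr, rfl⟩ e' hle
      by_cases heq : e' = r.1
      · exact heq ▸ ⟨r, hr, rfl⟩
      · have he'W : e' ∈ Prod.fst '' W :=
          hc1.2.2 r.1 ⟨r, hsub hr, rfl⟩ e' hle
        obtain ⟨r', hr', hre⟩ := he'W
        have hstep : IRel W r' r :=
          ⟨hr', hsub hr, Or.inl ⟨hre ▸ hle, hre ▸ heq⟩⟩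
        exact ⟨r', hD.2 _ _ hstep hr, hre⟩
  have hsndcfg : (A.toES.par T.toES).Config (Prod.snd '' D) := by
    refine ⟨hc2.1.subset (Set.image_mono hsub), ?_, ?_⟩
    · intro Y hY hYfin
      exact hc2.2.1 Y (hY.trans (Set.image_mono hsub)) hYfin
    · rintro e ⟨r, hr, rfl⟩ e' hle
      by_cases heq : e' = r.2
      · exact heq ▸ ⟨r, hr, rfl⟩
      · have he'W : e' ∈ Prod.snd '' W :=
          hc2.2.2 r.2 ⟨r, hsub hr, rfl⟩ e' hle
        obtain ⟨r', hr', hre⟩ := he'W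
        have hstep : IRel W r' r :=
          ⟨hr', hsub hr, Or.inr ⟨hre ▸ hle, hre ▸ heq⟩⟩
        exact ⟨r', hD.2 _ _ hstep hr, hre⟩
  refine ⟨hfstcfg, hsndcfg, fun p hp => hc3 p (hsub hp), ?_, ?_, secured_subset hc6 hsub⟩
  · rintro s ⟨r, hr, rfl⟩ t ⟨r', hr', rfl⟩ hlab
    have hmem : (r.1, r'.2) ∈ W :=
      hc4 r.1 ⟨r, hsub hr, rfl⟩ r'.2 ⟨r', hsub hr', rfl⟩ hlab
    have := good_fst_inj hτ ⟨hc1, hc2, hc3, hc4, hc5, hc6⟩ (r.1, r'.2) hmem r (hsub hr) rfl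
    exact this ▸ hr
  · ext e
    constructor
    · rintro ⟨-, ⟨r, hr, rfl⟩, rfl⟩
      exact ⟨r.2, ⟨r, hr, rfl⟩, (hc3 r (hsub hr)).symm⟩
    · rintro ⟨-, ⟨r, hr, rfl⟩, rfl⟩
      exact ⟨r.1, ⟨r, hr, rfl⟩, hc3 r (hsub hr)⟩

/-- A sub-secured-bijection of `W` is down-closed in `W`. -/
theorem dcl_of_good (hσ : IsPreStrategy S (A.dual.par B) σ)
    (hτ : IsPreStrategy T (B.dual.par C) τ)
    {W D : Set (IPt A C S T)} (hW : Good A B C S T σ τ W)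
    (hD : Good A B C S T σ τ D) (hsub : D ⊆ W) : Dcl W D := by
  refine ⟨hsub, ?_⟩
  rintro p q ⟨hpW, hqW, hlt⟩ hqD
  rcases hlt with hlt | hlt
  · have h1 : p.1 ∈ Prod.fst '' D := hD.1.2.2 q.1 ⟨q, hqD, rfl⟩ p.1 hlt.1
    obtain ⟨r, hr, hre⟩ := h1
    have := good_fst_inj hτ hW r (hsub hr) p hpW hre
    exact this ▸ hr
  · have h1 : p.2 ∈ Prod.snd '' D := hD.2.1.2.2 q.2 ⟨q, hqD, rfl⟩ p.2 hlt.1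
    obtain ⟨r, hr, hre⟩ := h1
    have := good_snd_inj hσ hW r (hsub hr) p hpW hre
    exact this ▸ hr

/-- The prime generated by `p` inside `W`. -/
def primeOf (W : Set (IPt A C S T)) (p : IPt A C S T) : Set (IPt A C S T) :=
  {q | q ∈ W ∧ Relation.ReflTransGen (IRel W) q p}

theorem primeOf_dcl {W : Set (IPt A C S T)} {p : IPt A C S T} :
    Dcl W (primeOf W p) := by
  refine ⟨fun q hq => hq.1, ?_⟩
  rintro r q hrq ⟨hqW, hqp⟩
  exact ⟨hrq.1, Relation.ReflTransGen.head hrq hqp⟩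

theorem mem_primeOf_self {W : Set (IPt A C S T)} {p : IPt A C S T}
    (hp : p ∈ W) : p ∈ primeOf W p := ⟨hp, Relation.ReflTransGen.refl⟩

theorem rtg_mem_right {W : Set (IPt A C S T)} {p q : IPt A C S T}
    (h : Relation.ReflTransGen (IRel W) q p) (hq : q ∈ W) : p ∈ W := by
  induction h with
  | refl => exact hq
  | tail _ hstep _ => exact hstep.2.1

theorem primeOf_top {W : Set (IPt A C S T)} {p : IPt A C S T} :
    ∀ q ∈ primeOf W p, Relation.ReflTransGen (IRel (primeOf W p)) q p := by
  intro q hq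
  have hpW : p ∈ W := rtg_mem_right hq.2 hq.1
  exact (dcl_chain primeOf_dcl (mem_primeOf_self hpW) hq.2).2

theorem primeOf_subset_of_dcl {W D : Set (IPt A C S T)} (hD : Dcl W D)
    {p : IPt A C S T} (hp : p ∈ D) : primeOf W p ⊆ D := by
  intro q hq
  exact (dcl_chain hD hp hq.2).1

/-- Tops of a secured set are unique. -/
theorem top_unique {G : Set (IPt A C S T)}
    (hsec : SecuredOn (S.toES.par C.toES) (A.toES.par T.toES) G)
    {p1 p2 : IPt A C S T}
    (h1m : p1 ∈ G) (h1t : ∀ q ∈ G, Relation.ReflTransGen (IRel G) q p1)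
    (h2m : p2 ∈ G) (h2t : ∀ q ∈ G, Relation.ReflTransGen (IRel G) q p2) :
    p1 = p2 :=
  hsec p1 p2 (h2t p1 h1m) (h1t p2 h2m)

theorem primeOf_eq {W D : Set (IPt A C S T)} (hD : Dcl W D)
    {t : IPt A C S T} (ht : t ∈ D)
    (htop : ∀ q ∈ D, Relation.ReflTransGen (IRel D) q t) :
    D = primeOf W t := by
  ext q
  constructor
  · intro hq
    exact ⟨hD.1 hq, rtg_mono hD.1 (htop q hq)⟩
  · intro hq
    exact (dcl_chain hD ht hq.2).1

end Core

end CompAux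
namespace CompAux
open Relation Set Sum
section Evts
variable {A B C S T : ESP} {σ : S.Evt → A.Evt ⊕ B.Evt} {τ : T.Evt → B.Evt ⊕ C.Evt}

theorem evt_good (G : (compInterES A B C S T σ τ).Evt) :
    Good A B C S T σ τ G.val := G.prop.1

theorem evt_prime (G : (compInterES A B C S T σ τ).Evt) :
    IsPrime (S.toES.par C.toES) (A.toES.par T.toES) G.val := G.prop.2

/-- The union of the graphs of a set of events of the composition. -/
def UX (x : Set (compES A B C S T σ τ).Evt) : Set (IPt A C S T) :=
  ⋃ H ∈ x, H.val.val

theorem mem_UX {x : Set (compES A B C S T σ τ).Evt} {q : IPt A C S T} :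
    q ∈ UX x ↔ ∃ H ∈ x, q ∈ H.val.val := by
  exact Set.mem_iUnion₂.trans (by simp only [exists_prop]; exact Iff.rfl)

theorem subset_UX {x : Set (compES A B C S T σ τ).Evt}
    {H : (compES A B C S T σ τ).Evt} (hH : H ∈ x) : H.val.val ⊆ UX x :=
  fun q hq => mem_UX.2 ⟨H, hH, hq⟩

theorem con_UX {x : Set (compES A B C S T σ τ).Evt}
    (hx : x ∈ (compES A B C S T σ τ).Con) : Good A B C S T σ τ (UX x) := by
  have h2 : (⋃ G ∈ (Subtype.val '' x), G.val) = UX x := by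
    exact Set.biUnion_image
  exact h2 ▸ hx.2

theorem config_UX_good {x : Set (compES A B C S T σ τ).Evt}
    (hx : (compES A B C S T σ τ).Config x) : Good A B C S T σ τ (UX x) :=
  con_UX (hx.2.1 x subset_rfl hx.1)

theorem con_of_good {x : Set (compES A B C S T σ τ).Evt} (hfin : x.Finite)
    (hgood : Good A B C S T σ τ (UX x)) :
    x ∈ (compES A B C S T σ τ).Con := by
  have h2 : (⋃ G ∈ (Subtype.val '' x), G.val) = UX x := by
    exact Set.biUnion_image
  exact ⟨hfin.image _, h2.symm ▸ hgood⟩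

theorem compLabel_spec (H : (compES A B C S T σ τ).Evt) :
    ∃ p, p ∈ H.val.val ∧
      (∀ q ∈ H.val.val, Relation.ReflTransGen (IRel H.val.val) q p) ∧
      lmap A B C S σ p.1 = Sum.map Sum.inl id (compLabel A B C S T σ τ H) := by
  have hv : compVis A B C S T σ τ H.val := H.prop
  exact ⟨hv.choose, hv.choose_spec.1, hv.choose_spec.2.1,
    hv.choose_spec.2.2.choose_spec⟩

theorem compLabel_eq (H : (compES A B C S T σ τ).Evt) {p : IPt A C S T}
    {e : A.Evt ⊕ C.Evt} (hp : p ∈ H.val.val)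
    (htop : ∀ q ∈ H.val.val, Relation.ReflTransGen (IRel H.val.val) q p)
    (he : lmap A B C S σ p.1 = Sum.map Sum.inl id e) :
    compLabel A B C S T σ τ H = e := by
  obtain ⟨p0, hp0, htop0, hl0⟩ := compLabel_spec H
  have hpp : p0 = p :=
    top_unique (evt_good H.val).2.2.2.2.2 hp0 htop0 hp htop
  rw [hpp] at hl0
  exact map_inl_id_inj (hl0.symm.trans he)

end Evts
end CompAux
namespace CompAux
open Relation Set Sum
section Labels
variable {A B C S T : ESP} {σ : S.Evt → A.Evt ⊕ B.Evt} {τ : T.Evt → B.Evt ⊕ C.Evt}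

/-- Any visible point of the union of a configuration yields a label of the
configuration; moreover its prime belongs to the configuration. -/
theorem mem_label_of_vis (hσ : IsPreStrategy S (A.dual.par B) σ)
    (hτ : IsPreStrategy T (B.dual.par C) τ)
    {x : Set (compES A B C S T σ τ).Evt}
    (hx : (compES A B C S T σ τ).Config x) {q : IPt A C S T} {e : A.Evt ⊕ C.Evt}
    (hq : q ∈ UX x) (he : lmap A B C S σ q.1 = Sum.map Sum.inl id e) :
    ∃ H ∈ x, H.val.val = primeOf (UX x) q ∧ compLabel A B C S T σ τ H = e := by
  have hW := config_UX_good hx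
  have hgood : Good A B C S T σ τ (primeOf (UX x) q) :=
    good_of_dcl hσ hτ hW primeOf_dcl
  have hprime : IsPrime (S.toES.par C.toES) (A.toES.par T.toES) (primeOf (UX x) q) :=
    ⟨q, mem_primeOf_self hq, primeOf_top⟩
  refine ⟨⟨⟨primeOf (UX x) q, hgood, hprime⟩,
    (⟨q, mem_primeOf_self hq, primeOf_top, e, he⟩ :
      compVis A B C S T σ τ ⟨primeOf (UX x) q, hgood, hprime⟩)⟩, ?_, rfl, ?_⟩
  · obtain ⟨H₀, hH₀, hq0⟩ := mem_UX.1 hq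
    have hsub : primeOf (UX x) q ⊆ H₀.val.val :=
      primeOf_subset_of_dcl
        (dcl_of_good hσ hτ hW (evt_good H₀.val) (subset_UX hH₀)) hq0
    exact hx.2.2 H₀ hH₀ _ hsub
  · exact compLabel_eq _ (mem_primeOf_self hq) primeOf_top he

theorem label_vis_of_mem {x : Set (compES A B C S T σ τ).Evt} {e : A.Evt ⊕ C.Evt}
    (he : e ∈ compLabel A B C S T σ τ '' x) :
    ∃ q ∈ UX x, lmap A B C S σ q.1 = Sum.map Sum.inl id e := by
  obtain ⟨H, hH, rfl⟩ := he
  obtain ⟨p, hp, -, hl⟩ := compLabel_spec H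
  exact ⟨p, subset_UX hH hp, hl⟩


theorem label_inl_of_S (hσ : IsPreStrategy S (A.dual.par B) σ)
    (hτ : IsPreStrategy T (B.dual.par C) τ)
    {x : Set (compES A B C S T σ τ).Evt}
    (hx : (compES A B C S T σ τ).Config x) {s : S.Evt} {a : A.Evt}
    (hs : Sum.inl s ∈ (Prod.fst '' (UX x) : Set (S.Evt ⊕ C.Evt)))
    (ha : σ s = Sum.inl a) :
    Sum.inl a ∈ compLabel A B C S T σ τ '' x := by
  obtain ⟨q, hq, hq1⟩ := hs
  obtain ⟨H, hH, -, hl⟩ := mem_label_of_vis hσ hτ hx hq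
    (e := Sum.inl a) (by simp [lmap, Sum.map, hq1, ha])
  exact ⟨H, hH, hl⟩

theorem exists_S_of_label_inl {x : Set (compES A B C S T σ τ).Evt} {a : A.Evt}
    (h : Sum.inl a ∈ compLabel A B C S T σ τ '' x) :
    ∃ s, Sum.inl s ∈ (Prod.fst '' (UX x) : Set (S.Evt ⊕ C.Evt)) ∧ σ s = Sum.inl a := by
  obtain ⟨q, hq, hl⟩ := label_vis_of_mem h
  cases hq1 : q.1 with
  | inl s =>
    refine ⟨s, ⟨q, hq, hq1⟩, ?_⟩
    rw [hq1] at hl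
    simpa [lmap, Sum.map] using hl
  | inr c => rw [hq1] at hl; simp [lmap, Sum.map] at hl

theorem snd_of_label_inl
    {x : Set (compES A B C S T σ τ).Evt}
    (hW : Good A B C S T σ τ (UX x)) {a : A.Evt}
    (h : Sum.inl a ∈ compLabel A B C S T σ τ '' x) :
    Sum.inl a ∈ (Prod.snd '' (UX x) : Set (A.Evt ⊕ T.Evt)) := by
  obtain ⟨q, hq, hl⟩ := label_vis_of_mem h
  rcases shape (hW.2.2.1 q hq) with ⟨s, a', h1, h2, h3⟩ | ⟨s, t, b, h1, h2, h3, h4⟩ | ⟨c, t, h1, h2, h5⟩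
  · rw [h1] at hl
    simp only [lmap, Sum.map, Sum.elim_inl, Function.comp, h3] at hl
    have : a' = a := Sum.inl_injective (Sum.inl_injective hl)
    exact ⟨q, hq, by rw [h2, this]⟩
  · rw [h1] at hl; simp [lmap, Sum.map, Function.comp, h3] at hl
  · rw [h1] at hl; simp [lmap, Sum.map, Function.comp] at hl

theorem label_inl_of_A (hσ : IsPreStrategy S (A.dual.par B) σ)
    (hτ : IsPreStrategy T (B.dual.par C) τ)
    {x : Set (compES A B C S T σ τ).Evt}
    (hx : (compES A B C S T σ τ).Config x) {a : A.Evt}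
    (ha : Sum.inl a ∈ (Prod.snd '' (UX x) : Set (A.Evt ⊕ T.Evt))) :
    Sum.inl a ∈ compLabel A B C S T σ τ '' x := by
  have hW := config_UX_good hx
  obtain ⟨q, hq, hq2⟩ := ha
  rcases shape (hW.2.2.1 q hq) with ⟨s, a', h1, h2, h3⟩ | ⟨s, t, b, h1, h2, h3, h4⟩ | ⟨c, t, h1, h2, h5⟩
  · have : a' = a := Sum.inl_injective (h2 ▸ hq2)
    subst this
    exact label_inl_of_S hσ hτ hx ⟨q, hq, h1⟩ h3
  · rw [h2] at hq2; exact absurd hq2 (by simp)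
  · rw [h2] at hq2; exact absurd hq2 (by simp)

theorem label_inr_of_fst (hσ : IsPreStrategy S (A.dual.par B) σ)
    (hτ : IsPreStrategy T (B.dual.par C) τ)
    {x : Set (compES A B C S T σ τ).Evt}
    (hx : (compES A B C S T σ τ).Config x) {c : C.Evt}
    (hc : Sum.inr c ∈ (Prod.fst '' (UX x) : Set (S.Evt ⊕ C.Evt))) :
    Sum.inr c ∈ compLabel A B C S T σ τ '' x := by
  obtain ⟨q, hq, hq1⟩ := hc
  obtain ⟨H, hH, -, hl⟩ := mem_label_of_vis hσ hτ hx hq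
    (e := Sum.inr c) (by simp [lmap, Sum.map, hq1])
  exact ⟨H, hH, hl⟩

theorem fst_of_label_inr {x : Set (compES A B C S T σ τ).Evt} {c : C.Evt}
    (h : Sum.inr c ∈ compLabel A B C S T σ τ '' x) :
    Sum.inr c ∈ (Prod.fst '' (UX x) : Set (S.Evt ⊕ C.Evt)) := by
  obtain ⟨q, hq, hl⟩ := label_vis_of_mem h
  cases hq1 : q.1 with
  | inl s => rw [hq1] at hl; simp [lmap, Sum.map, Function.comp] at hl
  | inr c' =>
    rw [hq1] at hl
    simp only [lmap, Sum.map, Sum.elim_inr, Function.comp, id] at hl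
    have : c' = c := Sum.inr_injective hl
    exact ⟨q, hq, by rw [hq1, this]⟩

theorem exists_T_of_label_inr {x : Set (compES A B C S T σ τ).Evt}
    (hW : Good A B C S T σ τ (UX x)) {c : C.Evt}
    (h : Sum.inr c ∈ compLabel A B C S T σ τ '' x) :
    ∃ t, Sum.inr t ∈ (Prod.snd '' (UX x) : Set (A.Evt ⊕ T.Evt)) ∧ τ t = Sum.inr c := by
  obtain ⟨q, hq, hl⟩ := label_vis_of_mem h
  rcases shape (hW.2.2.1 q hq) with ⟨s, a', h1, h2, h3⟩ | ⟨s, t, b, h1, h2, h3, h4⟩ | ⟨c', t, h1, h2, h5⟩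
  · rw [h1] at hl; simp [lmap, Sum.map, Function.comp, h3] at hl
  · rw [h1] at hl; simp [lmap, Sum.map, Function.comp, h3] at hl
  · rw [h1] at hl
    simp only [lmap, Sum.map, Sum.elim_inr, Function.comp, id] at hl
    have hcc : c' = c := Sum.inr_injective hl
    exact ⟨t, ⟨q, hq, h2⟩, hcc ▸ h5⟩

theorem label_inr_of_T (hσ : IsPreStrategy S (A.dual.par B) σ)
    (hτ : IsPreStrategy T (B.dual.par C) τ)
    {x : Set (compES A B C S T σ τ).Evt}
    (hx : (compES A B C S T σ τ).Config x) {t : T.Evt} {c : C.Evt}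
    (ht : Sum.inr t ∈ (Prod.snd '' (UX x) : Set (A.Evt ⊕ T.Evt)))
    (hc : τ t = Sum.inr c) :
    Sum.inr c ∈ compLabel A B C S T σ τ '' x := by
  have hW := config_UX_good hx
  obtain ⟨q, hq, hq2⟩ := ht
  rcases shape (hW.2.2.1 q hq) with ⟨s, a', h1, h2, h3⟩ | ⟨s, t', b, h1, h2, h3, h4⟩ | ⟨c', t', h1, h2, h5⟩
  · rw [h2] at hq2; exact absurd hq2 (by simp)
  · have htt : t' = t := Sum.inr_injective (h2 ▸ hq2)
    subst htt
    rw [hc] at h4; exact absurd h4 (by simp)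
  · have htt : t' = t := Sum.inr_injective (h2 ▸ hq2)
    subst htt
    have hcc : c' = c := Sum.inr_injective (h5.symm.trans hc)
    subst hcc
    exact label_inr_of_fst hσ hτ hx ⟨q, hq, h1⟩

end Labels
end CompAux
namespace CompAux
open Relation Set Sum
section Strat
variable {A B C S T : ESP} {σ : S.Evt → A.Evt ⊕ B.Evt} {τ : T.Evt → B.Evt ⊕ C.Evt}

theorem comp_label_image_config (hσ : IsPreStrategy S (A.dual.par B) σ)
    (hτ : IsPreStrategy T (B.dual.par C) τ)
    {x : Set (compES A B C S T σ τ).Evt}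
    (hx : (compES A B C S T σ τ).Config x) :
    (A.toES.par C.toES).Config (compLabel A B C S T σ τ '' x) := by
  have hW := config_UX_good hx
  have h1 : Sum.inl ⁻¹' (compLabel A B C S T σ τ '' x) =
      Sum.inl ⁻¹' (Prod.snd '' (UX x) : Set (A.Evt ⊕ T.Evt)) := by
    ext a
    exact ⟨fun h => snd_of_label_inl hW h, fun h => label_inl_of_A hσ hτ hx h⟩
  have h2 : Sum.inr ⁻¹' (compLabel A B C S T σ τ '' x) =
      Sum.inr ⁻¹' (Prod.fst '' (UX x) : Set (S.Evt ⊕ C.Evt)) := by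
    ext c
    exact ⟨fun h => fst_of_label_inr h, fun h => label_inr_of_fst hσ hτ hx h⟩
  exact config_par_mk (h1 ▸ config_par_inl hW.2.1) (h2 ▸ config_par_inr hW.1)

theorem comp_label_injOn (hσ : IsPreStrategy S (A.dual.par B) σ)
    (hτ : IsPreStrategy T (B.dual.par C) τ)
    {x : Set (compES A B C S T σ τ).Evt}
    (hx : (compES A B C S T σ τ).Config x) :
    Set.InjOn (compLabel A B C S T σ τ) x := by
  have hW := config_UX_good hx
  intro H hH H' hH' he
  obtain ⟨p, hp, htop, hl⟩ := compLabel_spec H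
  obtain ⟨p', hp', htop', hl'⟩ := compLabel_spec H'
  rw [he] at hl
  have hpq : p.1 = p'.1 :=
    lmap_injOn hσ hW.1 p.1 ⟨p, subset_UX hH hp, rfl⟩ p'.1
      ⟨p', subset_UX hH' hp', rfl⟩ (hl.trans hl'.symm)
  have hpp : p = p' :=
    good_fst_inj hτ hW p (subset_UX hH hp) p' (subset_UX hH' hp') hpq
  have hv : H.val.val = H'.val.val := by
    rw [primeOf_eq (dcl_of_good hσ hτ hW (evt_good H.val) (subset_UX hH)) hp htop,
      primeOf_eq (dcl_of_good hσ hτ hW (evt_good H'.val) (subset_UX hH')) hp' htop',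
      hpp]
  exact Subtype.ext (Subtype.ext hv)

theorem comp_prestrategy (hσ : IsPreStrategy S (A.dual.par B) σ)
    (hτ : IsPreStrategy T (B.dual.par C) τ) :
    IsPreStrategy (compESP A B C S T σ τ) (A.dual.par C)
      (compLabel A B C S T σ τ) :=
  ⟨⟨fun _ hx => comp_label_image_config hσ hτ hx,
    fun _ hx => comp_label_injOn hσ hτ hx⟩, fun _ => rfl⟩

end Strat
end CompAux
namespace CompAux
open Relation Set Sum
section ReceptA
variable {A B C S T : ESP} {σ : S.Evt → A.Evt ⊕ B.Evt} {τ : T.Evt → B.Evt ⊕ C.Evt}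

theorem UX_mono {x x' : Set (compES A B C S T σ τ).Evt} (h : x ⊆ x') :
    UX x ⊆ UX x' := by
  intro q hq
  obtain ⟨H, hH, hqH⟩ := mem_UX.1 hq
  exact mem_UX.2 ⟨H, h hH, hqH⟩

theorem UX_insert {H : (compES A B C S T σ τ).Evt}
    {x : Set (compES A B C S T σ τ).Evt} :
    UX (insert H x) = H.val.val ∪ UX x := by
  exact Set.biUnion_insert _ _ _

theorem images_eq_of_labels {W : Set (IPt A C S T)}
    (h : ∀ p ∈ W, lmap A B C S σ p.1 = rmap A B C T τ p.2) :
    lmap A B C S σ '' (Prod.fst '' W) = rmap A B C T τ '' (Prod.snd '' W) := by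
  ext e
  constructor
  · rintro ⟨-, ⟨q, hq, rfl⟩, rfl⟩
    exact ⟨q.2, ⟨q, hq, rfl⟩, (h q hq).symm⟩
  · rintro ⟨-, ⟨q, hq, rfl⟩, rfl⟩
    exact ⟨q.1, ⟨q, hq, rfl⟩, h q hq⟩

theorem recept_inl (hA : A.toES.IsES) (hS : S.toES.IsES)
    (hσ : IsPreStrategy S (A.dual.par B) σ) (hτ : IsPreStrategy T (B.dual.par C) τ)
    (hσr : Receptive S (A.dual.par B) σ) (hσc : Courteous S (A.dual.par B) σ)
    {x : Set (compES A B C S T σ τ).Evt}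
    (hx : (compES A B C S T σ τ).Config x) {a₀ : A.Evt}
    (hpol : A.pol a₀ = true)
    (hnin : Sum.inl a₀ ∉ compLabel A B C S T σ τ '' x)
    (hcfg : (A.toES.par C.toES).Config
      (insert (Sum.inl a₀) (compLabel A B C S T σ τ '' x))) :
    ∃! H, H ∉ x ∧ (compES A B C S T σ τ).Config (insert H x) ∧
      compLabel A B C S T σ τ H = Sum.inl a₀ := by
  classical
  set L := compLabel A B C S T σ τ '' x with hL
  have hW : Good A B C S T σ τ (UX x) := config_UX_good hx
  set W := UX x with hWdef
  have hzcfg : (S.toES.par C.toES).Config (Prod.fst '' W) := hW.1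
  have hzS : S.toES.Config (Sum.inl ⁻¹' (Prod.fst '' W)) := config_par_inl hzcfg
  set zS := Sum.inl ⁻¹' (Prod.fst '' W : Set (S.Evt ⊕ C.Evt)) with hzSdef
  have hyA : A.toES.Config (Sum.inl ⁻¹' (Prod.snd '' W)) := config_par_inl hW.2.1
  set yA := Sum.inl ⁻¹' (Prod.snd '' W : Set (A.Evt ⊕ T.Evt)) with hyAdef
  -- the A-part of σ '' zS is the A-part of the labels
  have hApart : ∀ a : A.Evt, Sum.inl a ∈ σ '' zS ↔ Sum.inl a ∈ L := by
    intro a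
    constructor
    · rintro ⟨s, hs, hsa⟩
      exact label_inl_of_S hσ hτ hx hs hsa
    · intro h
      obtain ⟨s, hs, hsa⟩ := exists_S_of_label_inl h
      exact ⟨s, hs, hsa⟩
  -- the new event is σ-negative
  have hpolσ : (A.dual.par B).pol (Sum.inl a₀) = false := by
    simp [ESP.par, ESP.dual, hpol]
  -- inl a₀ is not in σ '' zS
  have hnot : Sum.inl a₀ ∉ σ '' zS := fun h => hnin ((hApart a₀).1 h)
  -- insert (inl a₀) (σ '' zS) is a configuration of A^⊥ ∥ B
  have hcfgS : (A.toES.par B.toES).Config (insert (Sum.inl a₀) (σ '' zS)) := by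
    have hbase : (A.toES.par B.toES).Config (σ '' zS) := hσ.1.1 zS hzS
    refine ⟨hbase.1.insert _, ?_, ?_⟩
    · intro Y hY hYfin
      refine con_par_mk ?_ ?_
      · have hsub : (Sum.inl '' (Sum.inl ⁻¹' Y) : Set (A.Evt ⊕ C.Evt)) ⊆
            insert (Sum.inl a₀) L := by
          rintro - ⟨a', ha', rfl⟩
          rcases hY ha' with h | h
          · exact Or.inl (by rw [Sum.inl_injective h])
          · exact Or.inr ((hApart a').1 h)
        have := hcfg.2.1 _ hsub ((hYfin.preimage (Sum.inl_injective.injOn)).image _)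
        have h3 : Sum.inl ⁻¹' (Sum.inl '' (Sum.inl ⁻¹' Y) : Set (A.Evt ⊕ C.Evt)) =
            Sum.inl ⁻¹' Y := Set.preimage_image_eq _ Sum.inl_injective
        exact h3 ▸ this.1
      · have hsub : (Sum.inr '' (Sum.inr ⁻¹' Y) : Set (A.Evt ⊕ B.Evt)) ⊆ σ '' zS := by
          rintro - ⟨b, hb, rfl⟩
          rcases hY hb with h | h
          · exact absurd h (by simp)
          · exact h
        have := hbase.2.1 _ hsub ((hYfin.preimage (Sum.inr_injective.injOn)).image _)
        have h3 : Sum.inr ⁻¹' (Sum.inr '' (Sum.inr ⁻¹' Y) : Set (A.Evt ⊕ B.Evt)) =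
            Sum.inr ⁻¹' Y := Set.preimage_image_eq _ Sum.inr_injective
        exact h3 ▸ this.2
    · intro e he e' hle
      rcases he with he | he
      · subst he
        cases e' with
        | inl a' =>
          by_cases haa : a' = a₀
          · exact Or.inl (by rw [haa])
          · have := hcfg.2.2 (Sum.inl a₀) (Set.mem_insert _ _) (Sum.inl a') hle
            rcases this with h | h
            · exact absurd (Sum.inl_injective h) haa
            · exact Or.inr ((hApart a').2 h)
        | inr b => exact absurd hle par_le_rl
      · exact Or.inr (hbase.2.2 e he e' hle)
  -- apply receptivity of σ
  obtain ⟨sN, ⟨hs1, hs2, hs3⟩, hsuniq⟩ := hσr zS hzS (Sum.inl a₀) hpolσ hnot hcfgS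
  set pN : IPt A C S T := (Sum.inl sN, Sum.inl a₀) with hpNdef
  set Wex : Set (IPt A C S T) := insert pN W with hWexdef
  -- basic facts
  have hsNz : Sum.inl sN ∉ (Prod.fst '' W : Set (S.Evt ⊕ C.Evt)) := hs1
  have hpNW : pN ∉ W := fun h => hs1 ⟨pN, h, rfl⟩
  have ha₀y : Sum.inl a₀ ∉ (Prod.snd '' W : Set (A.Evt ⊕ T.Evt)) := by
    intro h
    exact hnin (label_inl_of_A hσ hτ hx h)
  -- Wex is a secured bijection
  have hfst : (Prod.fst : IPt A C S T → S.Evt ⊕ C.Evt) '' Wex =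
      insert (Sum.inl sN) (Prod.fst '' W) := Set.image_insert_eq
  have hsnd : (Prod.snd : IPt A C S T → A.Evt ⊕ T.Evt) '' Wex =
      insert (Sum.inl a₀) (Prod.snd '' W) := Set.image_insert_eq
  have hfstcfg0 : (S.toES.par C.toES).Config
      (insert (Sum.inl sN : S.Evt ⊕ C.Evt)
        ((Prod.fst : IPt A C S T → S.Evt ⊕ C.Evt) '' W)) := by
    refine config_par_mk ?_ ?_
    · have h1 : (Sum.inl ⁻¹' (insert (Sum.inl sN) (Prod.fst '' W)) : Set S.Evt) =
          insert sN zS := by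
        ext s; simp [zS]
      erw [h1]; exact hs2
    · have h1 : (Sum.inr ⁻¹' (insert (Sum.inl sN) (Prod.fst '' W)) : Set C.Evt) =
          Sum.inr ⁻¹' (Prod.fst '' W) := by
        ext c; simp
      erw [h1]; exact config_par_inr hzcfg
  have hfstcfg : (S.toES.par C.toES).Config
      ((Prod.fst : IPt A C S T → S.Evt ⊕ C.Evt) '' Wex) := by
    erw [hfst]; exact hfstcfg0
  have hsndcfg0 : (A.toES.par T.toES).Config
      (insert (Sum.inl a₀ : A.Evt ⊕ T.Evt)
        ((Prod.snd : IPt A C S T → A.Evt ⊕ T.Evt) '' W)) := by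
    refine config_par_mk ?_ ?_
    · have h1 : (Sum.inl ⁻¹' (insert (Sum.inl a₀) (Prod.snd '' W)) : Set A.Evt) =
          insert a₀ yA := by
        ext a; simp [yA]
      have h2 : insert a₀ yA = Sum.inl ⁻¹' (insert (Sum.inl a₀) L) := by
        ext a
        constructor
        · rintro (rfl | h)
          · exact Or.inl rfl
          · obtain ⟨q, hq, hq2⟩ := h
            exact Or.inr (label_inl_of_A hσ hτ hx ⟨q, hq, hq2⟩)
        · rintro (h | h)
          · exact Or.inl (Sum.inl_injective h)
          · exact Or.inr (snd_of_label_inl hW h)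
      erw [h1, h2]
      exact config_par_inl hcfg
    · have h1 : (Sum.inr ⁻¹' (insert (Sum.inl a₀) (Prod.snd '' W)) : Set T.Evt) =
          Sum.inr ⁻¹' (Prod.snd '' W) := by
        ext t; simp
      erw [h1]; exact config_par_inr hW.2.1
  have hsndcfg : (A.toES.par T.toES).Config
      ((Prod.snd : IPt A C S T → A.Evt ⊕ T.Evt) '' Wex) := by
    erw [hsnd]; exact hsndcfg0
  have hlabN : lmap A B C S σ pN.1 = rmap A B C T τ pN.2 := by
    simp [lmap, rmap, Sum.map, hs3, hpNdef]; rfl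
  have hlabs : ∀ p ∈ Wex, lmap A B C S σ p.1 = rmap A B C T τ p.2 := by
    intro p hp
    rcases Set.mem_insert_iff.1 hp with rfl | hpW
    · exact hlabN
    · exact hW.2.2.1 p hpW
  have hnosucc : ∀ q, ¬ IRel Wex pN q := by
    rintro q ⟨-, hq, hlt | hlt⟩
    · obtain ⟨hle, hne⟩ := hlt
      cases hq1 : q.1 with
      | inl s₁ =>
        rw [hq1] at hle hne
        rcases Set.mem_insert_iff.1 hq with rfl | hqW
        · exact hne hq1
        · have hmem : s₁ ∈ zS := ⟨q, hqW, hq1⟩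
          exact hs1 (hzS.2.2 s₁ hmem sN hle)
      | inr c => rw [hq1] at hle; exact par_le_lr hle
    · obtain ⟨hle, hne⟩ := hlt
      cases hq2 : q.2 with
      | inl a₁ =>
        rw [hq2] at hle hne
        rcases Set.mem_insert_iff.1 hq with rfl | hqW
        · exact hne hq2
        · have hmem : a₁ ∈ yA := ⟨q, hqW, hq2⟩
          exact ha₀y (hyA.2.2 a₁ hmem a₀ hle)
      | inr t₁ => rw [hq2] at hle; exact par_le_lr hle
  have hchainfix : ∀ q, Relation.ReflTransGen (IRel Wex) pN q → q = pN := by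
    intro q hq
    rcases hq.cases_head with h | ⟨r, hr, -⟩
    · exact h.symm
    · exact absurd hr (hnosucc r)
  have hrestrict : ∀ u v, Relation.ReflTransGen (IRel Wex) u v →
      v = pN ∨ Relation.ReflTransGen (IRel W) u v := by
    intro u v huv
    induction huv using Relation.ReflTransGen.head_induction_on with
    | refl => exact Or.inr Relation.ReflTransGen.refl
    | @head p r hpr hrv ih =>
      rcases ih with rfl | ih
      · exact Or.inl rfl
      · by_cases hrp : r = pN
        · subst hrp; exact Or.inl (hchainfix _ hrv)
        · have hpW : p ∈ W := by
            rcases Set.mem_insert_iff.1 hpr.1 with rfl | h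
            · exact absurd hpr (hnosucc r)
            · exact h
          have hrW : r ∈ W := by
            rcases Set.mem_insert_iff.1 hpr.2.1 with h | h
            · exact absurd h hrp
            · exact h
          exact Or.inr (Relation.ReflTransGen.head ⟨hpW, hrW, hpr.2.2⟩ ih)
  have hWex : Good A B C S T σ τ Wex := by
    refine ⟨hfstcfg, hsndcfg, hlabs, ?_, images_eq_of_labels hlabs, ?_⟩
    · -- closure
      intro s hs t ht hlab
      obtain ⟨q, hq, rfl⟩ := hs
      obtain ⟨q', hq', rfl⟩ := ht
      rcases Set.mem_insert_iff.1 hq with rfl | hqW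
      · rcases Set.mem_insert_iff.1 hq' with rfl | hq'W
        · exact Set.mem_insert _ _
        · -- q' old with label inl (inl a₀)
          have hr : rmap A B C T τ q'.2 = Sum.inl (Sum.inl a₀) := by
            rw [← hlab]; simp [lmap, Sum.map, hs3, hpNdef]; rfl
          cases hq'2 : q'.2 with
          | inl a' =>
            rw [hq'2] at hr
            have : a' = a₀ := by simpa [rmap] using hr
            subst this
            exact absurd ⟨q', hq'W, hq'2⟩ ha₀y
          | inr t' =>
            rw [hq'2] at hr
            cases htt : τ t' with
            | inl b => simp [rmap, htt] at hr
            | inr c => simp [rmap, htt] at hr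
      · rcases Set.mem_insert_iff.1 hq' with rfl | hq'W
        · -- q old with σ-label inl (inl a₀): impossible
          have hls : lmap A B C S σ q.1 = Sum.inl (Sum.inl a₀) := by
            rw [hlab]; simp [rmap, hpNdef]
          cases hq1 : q.1 with
          | inl s' =>
            rw [hq1] at hls
            have hss : σ s' = Sum.inl a₀ := by
              simpa [lmap, Sum.map] using hls
            exact absurd ((hApart a₀).1 ⟨s', ⟨q, hqW, hq1⟩, hss⟩) hnin
          | inr c => rw [hq1] at hls; simp [lmap, Sum.map] at hls
        · exact Set.mem_insert_of_mem _ (hW.2.2.2.1 q.1 ⟨q, hqW, rfl⟩ q'.2 ⟨q', hq'W, rfl⟩ hlab)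
    · -- secured
      intro p q hpq hqp
      by_cases hp : p = pN
      · subst hp; exact (hchainfix q hpq).symm
      · by_cases hq : q = pN
        · subst hq; exact hchainfix p hqp
        · rcases hrestrict p q hpq with h | h1
          · exact absurd h hq
          · rcases hrestrict q p hqp with h | h2
            · exact absurd h hp
            · exact hW.2.2.2.2.2 p q h1 h2
  -- build the new event
  have hpNWex : pN ∈ Wex := Set.mem_insert _ _
  have hGoodN : Good A B C S T σ τ (primeOf Wex pN) :=
    good_of_dcl hσ hτ hWex primeOf_dcl
  have hPrimeN : IsPrime (S.toES.par C.toES) (A.toES.par T.toES) (primeOf Wex pN) :=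
    ⟨pN, mem_primeOf_self hpNWex, primeOf_top⟩
  have hvisN : lmap A B C S σ pN.1 =
      Sum.map Sum.inl id (Sum.inl a₀ : A.Evt ⊕ C.Evt) := by
    simp [lmap, Sum.map, hs3, hpNdef]; rfl
  have hvisHN : compVis A B C S T σ τ ⟨primeOf Wex pN, hGoodN, hPrimeN⟩ :=
    ⟨pN, mem_primeOf_self hpNWex, primeOf_top, Sum.inl a₀, hvisN⟩
  set HN : (compES A B C S T σ τ).Evt :=
    ⟨⟨primeOf Wex pN, hGoodN, hPrimeN⟩, hvisHN⟩ with hHNdef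
  have hHNval : HN.val.val = primeOf Wex pN := rfl
  have hHNlab : compLabel A B C S T σ τ HN = Sum.inl a₀ :=
    compLabel_eq _ (mem_primeOf_self hpNWex) primeOf_top hvisN
  -- down-closure of graphs of events of `insert HN x` in Wex
  have hdclmem : ∀ H' ∈ insert HN x, Dcl Wex (H'.val.val : Set (IPt A C S T)) := by
    intro H' hH'
    rcases Set.mem_insert_iff.1 hH' with rfl | hH'x
    · exact primeOf_dcl
    · exact dcl_of_good hσ hτ hWex (evt_good H'.val)
        ((subset_UX hH'x).trans (Set.subset_insert _ _))
  -- the S-predecessors of sN are already in zS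
  have hPredS : ∀ u, S.toES.lt u sN → u ∈ zS := by
    intro u hu
    have := hs2.2.2 sN (Set.mem_insert _ _) u hu.1
    rcases Set.mem_insert_iff.1 this with rfl | h
    · exact absurd rfl hu.2
    · exact h
  refine ⟨HN, ⟨?_, ?_, hHNlab⟩, ?_⟩
  · -- not in x
    intro hmem
    exact hnin ⟨HN, hmem, hHNlab⟩
  · -- configuration of the extension
    refine ⟨hx.1.insert _, ?_, ?_⟩
    · intro Y hY hYfin
      have hdcl : Dcl Wex (UX Y) := dcl_union (fun H' hH' => hdclmem H' (hY hH'))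
      have hgood : Good A B C S T σ τ (UX Y) := good_of_dcl hσ hτ hWex hdcl
      exact con_of_good hYfin hgood
    · intro H hH H' hle
      rcases Set.mem_insert_iff.1 hH with rfl | hHx
      · by_cases hpm : pN ∈ (H'.val.val : Set (IPt A C S T))
        · have h1 : primeOf Wex pN ⊆ H'.val.val :=
            primeOf_subset_of_dcl
              (dcl_of_good hσ hτ hWex (evt_good H'.val)
                (Set.Subset.trans hle primeOf_dcl.1)) hpm
          have : H' = HN :=
            Subtype.ext (Subtype.ext (Set.Subset.antisymm hle h1))
          exact this ▸ Set.mem_insert _ _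
        · have hsubW : (H'.val.val : Set (IPt A C S T)) ⊆ W := by
            intro q hq
            rcases Set.mem_insert_iff.1 (primeOf_dcl.1 (hle hq)) with rfl | h
            · exact absurd hq hpm
            · exact h
          obtain ⟨q', hq', htop'⟩ := evt_prime H'.val
          obtain ⟨H₀, hH₀, hqH₀⟩ := mem_UX.1 (hsubW hq')
          have h2 : (H'.val.val : Set (IPt A C S T)) ⊆ H₀.val.val := by
            rw [primeOf_eq (dcl_of_good hσ hτ hW (evt_good H'.val) hsubW) hq' htop']
            exact primeOf_subset_of_dcl
              (dcl_of_good hσ hτ hW (evt_good H₀.val) (subset_UX hH₀)) hqH₀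
          exact Set.mem_insert_of_mem _ (hx.2.2 H₀ hH₀ H' h2)
      · exact Set.mem_insert_of_mem _ (hx.2.2 H hHx H' hle)
  · -- uniqueness
    intro H hH
    obtain ⟨hH1, hH2, hH3⟩ := hH
    have hW' : Good A B C S T σ τ (UX (insert H x)) := config_UX_good hH2
    set W' := UX (insert H x) with hW'def
    have hWW' : W ⊆ W' := UX_mono (Set.subset_insert _ _)
    have hHW' : (H.val.val : Set (IPt A C S T)) ⊆ W' := subset_UX (Set.mem_insert _ _)
    obtain ⟨p', hp', htop', hl'⟩ := compLabel_spec H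
    rw [hH3] at hl'
    -- analyse the top of H
    obtain ⟨s'', hp'1, hp'2, hσs''⟩ :
        ∃ s'', p'.1 = Sum.inl s'' ∧ p'.2 = Sum.inl a₀ ∧ σ s'' = Sum.inl a₀ := by
      rcases shape ((evt_good H.val).2.2.1 p' hp') with
        ⟨s'', a', h1, h2, h3⟩ | ⟨s'', t', b, h1, h2, h3, h4⟩ | ⟨c', t', h1, h2, h3⟩
      · rw [h1] at hl'
        simp only [lmap, Sum.map, Sum.elim_inl, Function.comp, h3] at hl'
        have haa : a' = a₀ := Sum.inl_injective (Sum.inl_injective hl')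
        subst haa
        exact ⟨s'', h1, h2, h3⟩
      · rw [h1] at hl'; simp [lmap, Sum.map, Function.comp, h3] at hl'
      · rw [h1] at hl'; simp [lmap, Sum.map, Function.comp] at hl'
    have hp'pN : p' = (Sum.inl s'', Sum.inl a₀) := Prod.ext hp'1 hp'2
    have hs''W' : Sum.inl s'' ∈ (Prod.fst '' W' : Set (S.Evt ⊕ C.Evt)) :=
      ⟨p', hHW' hp', hp'1⟩
    have hz'cfg : (S.toES.par C.toES).Config (Prod.fst '' W') := hW'.1
    have hz'S : S.toES.Config (Sum.inl ⁻¹' (Prod.fst '' W')) := config_par_inl hz'cfg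
    have hs''notin : s'' ∉ zS := by
      intro hmem
      exact hnin ((hApart a₀).1 ⟨s'', hmem, hσs''⟩)
    -- all strict S-predecessors of s'' are in zS
    have hPred : ∀ u, S.toES.lt u s'' → u ∈ zS := by
      intro u hu
      obtain ⟨w, huw, hw⟩ := le_imc_of_lt hS hu
      have hpolS : S.pol s'' = false := by
        have h := hσ.2 s''
        rw [hσs''] at h
        rw [← h]
        simp [ESP.par, ESP.dual, hpol]
      have himcAB : (A.dual.par B).toES.imc (σ w) (σ s'') := by
        refine hσc w s'' hw ?_
        intro hpair
        rw [Prod.mk.injEq] at hpair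
        rw [hpair.2] at hpolS
        exact Bool.true_eq_false.mp hpolS
      rw [hσs''] at himcAB
      obtain ⟨a₁, hwa, himc⟩ :=
        par_imc_inl' (E := A.toES) (F := B.toES) himcAB
      have hwz' : w ∈ Sum.inl ⁻¹' (Prod.fst '' W' : Set (S.Evt ⊕ C.Evt)) := by
        have hs''z' : s'' ∈ Sum.inl ⁻¹' (Prod.fst '' W' : Set (S.Evt ⊕ C.Evt)) := hs''W'
        exact hz'S.2.2 s'' hs''z' w hw.1.1
      obtain ⟨q_w, hq_wW', hq_w1⟩ := hwz'
      have hq_wlab : lmap A B C S σ q_w.1 =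
          Sum.map Sum.inl id (Sum.inl a₁ : A.Evt ⊕ C.Evt) := by
        rw [hq_w1]; simp [lmap, Sum.map, hwa]
      obtain ⟨H₁, hH₁mem, hH₁val, hH₁lab⟩ :=
        mem_label_of_vis hσ hτ hH2 hq_wW' hq_wlab
      have hH₁x : H₁ ∈ x := by
        rcases Set.mem_insert_iff.1 hH₁mem with rfl | hmem
        · rw [hH3] at hH₁lab
          exact absurd (Sum.inl_injective hH₁lab).symm himc.1.2
        · exact hmem
      have hq_wW : q_w ∈ W := by
        have : q_w ∈ (H₁.val.val : Set (IPt A C S T)) := by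
          rw [hH₁val]; exact mem_primeOf_self hq_wW'
        exact subset_UX hH₁x this
      have hwzS : w ∈ zS := ⟨q_w, hq_wW, hq_w1⟩
      exact hzS.2.2 w hwzS u huw
    -- insert s'' zS is a configuration of S
    have hzSsub : insert s'' zS ⊆ Sum.inl ⁻¹' (Prod.fst '' W' : Set (S.Evt ⊕ C.Evt)) := by
      intro u hu
      rcases Set.mem_insert_iff.1 hu with rfl | hu
      · exact hs''W'
      · obtain ⟨q, hq, hq1⟩ := hu
        exact ⟨q, hWW' hq, hq1⟩
    have hcfg'' : S.toES.Config (insert s'' zS) := by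
      refine ⟨hzS.1.insert _, ?_, ?_⟩
      · intro Y hY hYfin
        exact hz'S.2.1 Y (hY.trans hzSsub) hYfin
      · intro e he u hue
        rcases Set.mem_insert_iff.1 he with rfl | he
        · by_cases hus : u = e
          · exact hus ▸ Set.mem_insert _ _
          · exact Set.mem_insert_of_mem _ (hPred u ⟨hue, hus⟩)
        · exact Set.mem_insert_of_mem _ (hzS.2.2 e he u hue)
    -- uniqueness of receptivity forces s'' = sN
    have hseq : s'' = sN := hsuniq s'' ⟨hs''notin, hcfg'', hσs''⟩
    subst hseq
    have hp'eq : p' = pN := hp'pN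
    rw [hp'eq] at hp' htop'
    -- Wex is down-closed in W'
    have hdclWex : Dcl W' Wex := by
      constructor
      · intro q hq
        rcases Set.mem_insert_iff.1 hq with rfl | h
        · exact hHW' hp'
        · exact hWW' h
      · intro r v hrv hv
        rcases Set.mem_insert_iff.1 hv with rfl | hvW
        · rcases hrv.2.2 with ⟨hle, hne⟩ | ⟨hle, hne⟩
          · cases hr1 : r.1 with
            | inl s₁ =>
              rw [hr1] at hle hne
              have hs₁ : s₁ ∈ zS :=
                hPred s₁ ⟨hle, fun h => hne (by rw [h])⟩
              obtain ⟨r₀, hr₀, hr₀1⟩ := hs₁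
              have : r₀ = r :=
                good_fst_inj hτ hW' r₀ (hWW' hr₀) r hrv.1 (by rw [hr₀1, hr1])
              exact Set.mem_insert_of_mem _ (this ▸ hr₀)
            | inr c => rw [hr1] at hle; exact absurd hle par_le_rl
          · cases hr2 : r.2 with
            | inl a₁ =>
              rw [hr2] at hle hne
              have ha₁ : Sum.inl a₁ ∈ insert (Sum.inl a₀ : A.Evt ⊕ C.Evt) L := by
                refine hcfg.2.2 (Sum.inl a₀) (Set.mem_insert _ _) (Sum.inl a₁) hle
              rcases Set.mem_insert_iff.1 ha₁ with heq | hmem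
              · exact absurd (by rw [(Sum.inl_injective heq : a₁ = a₀)] : Sum.inl a₁ = pN.2) hne
              · obtain ⟨r₀, hr₀, hr₀2⟩ := snd_of_label_inl hW hmem
                have : r₀ = r :=
                  good_snd_inj hσ hW' r₀ (hWW' hr₀) r hrv.1 (by rw [hr₀2, hr2])
                exact Set.mem_insert_of_mem _ (this ▸ hr₀)
            | inr t₁ => rw [hr2] at hle; exact absurd hle par_le_rl
        · exact Set.mem_insert_of_mem _
            ((dcl_of_good hσ hτ hW' hW hWW').2 r v hrv hvW)
    have hsubWex : (H.val.val : Set (IPt A C S T)) ⊆ Wex := by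
      rw [primeOf_eq (dcl_of_good hσ hτ hW' (evt_good H.val) hHW') hp' htop']
      exact primeOf_subset_of_dcl hdclWex hpNWex
    have hfinal : (H.val.val : Set (IPt A C S T)) = primeOf Wex pN := by
      apply Set.Subset.antisymm
      · intro q hq
        exact ⟨hsubWex hq, rtg_mono hsubWex (htop' q hq)⟩
      · exact primeOf_subset_of_dcl
          (dcl_of_good hσ hτ hWex (evt_good H.val) hsubWex) hp'
    exact Subtype.ext (Subtype.ext hfinal)

end ReceptA
end CompAux
namespace CompAux
open Relation Set Sum
section ReceptC
variable {A B C S T : ESP} {σ : S.Evt → A.Evt ⊕ B.Evt} {τ : T.Evt → B.Evt ⊕ C.Evt}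

theorem recept_inr (hC : C.toES.IsES) (hT : T.toES.IsES)
    (hσ : IsPreStrategy S (A.dual.par B) σ) (hτ : IsPreStrategy T (B.dual.par C) τ)
    (hτr : Receptive T (B.dual.par C) τ) (hτc : Courteous T (B.dual.par C) τ)
    {x : Set (compES A B C S T σ τ).Evt}
    (hx : (compES A B C S T σ τ).Config x) {c₀ : C.Evt}
    (hpol : C.pol c₀ = false)
    (hnin : Sum.inr c₀ ∉ compLabel A B C S T σ τ '' x)
    (hcfg : (A.toES.par C.toES).Config
      (insert (Sum.inr c₀) (compLabel A B C S T σ τ '' x))) :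
    ∃! H, H ∉ x ∧ (compES A B C S T σ τ).Config (insert H x) ∧
      compLabel A B C S T σ τ H = Sum.inr c₀ := by
  classical
  set L := compLabel A B C S T σ τ '' x with hL
  have hW : Good A B C S T σ τ (UX x) := config_UX_good hx
  set W := UX x with hWdef
  have hzcfg : (S.toES.par C.toES).Config (Prod.fst '' W) := hW.1
  have hycfg : (A.toES.par T.toES).Config (Prod.snd '' W) := hW.2.1
  have hyT : T.toES.Config (Sum.inr ⁻¹' (Prod.snd '' W)) := config_par_inr hycfg
  set yT := Sum.inr ⁻¹' (Prod.snd '' W : Set (A.Evt ⊕ T.Evt)) with hyTdef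
  have hzC : C.toES.Config (Sum.inr ⁻¹' (Prod.fst '' W)) := config_par_inr hzcfg
  set zC := Sum.inr ⁻¹' (Prod.fst '' W : Set (S.Evt ⊕ C.Evt)) with hzCdef
  -- the C-part of τ '' yT is the C-part of the labels
  have hCpart : ∀ c : C.Evt, Sum.inr c ∈ τ '' yT ↔ Sum.inr c ∈ L := by
    intro c
    constructor
    · rintro ⟨t, ht, htc⟩
      exact label_inr_of_T hσ hτ hx ht htc
    · intro h
      obtain ⟨t, ht, htc⟩ := exists_T_of_label_inr hW h
      exact ⟨t, ht, htc⟩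
  have hpolτ : (B.dual.par C).pol (Sum.inr c₀) = false := by
    simp [ESP.par, ESP.dual, hpol]
  have hnot : Sum.inr c₀ ∉ τ '' yT := fun h => hnin ((hCpart c₀).1 h)
  have hcfgT : (B.toES.par C.toES).Config (insert (Sum.inr c₀) (τ '' yT)) := by
    have hbase : (B.toES.par C.toES).Config (τ '' yT) := hτ.1.1 yT hyT
    refine ⟨hbase.1.insert _, ?_, ?_⟩
    · intro Y hY hYfin
      refine con_par_mk ?_ ?_
      · have hsub : (Sum.inl '' (Sum.inl ⁻¹' Y) : Set (B.Evt ⊕ C.Evt)) ⊆ τ '' yT := by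
          rintro - ⟨b, hb, rfl⟩
          rcases hY hb with h | h
          · exact absurd h (by simp)
          · exact h
        have := hbase.2.1 _ hsub ((hYfin.preimage (Sum.inl_injective.injOn)).image _)
        have h3 : Sum.inl ⁻¹' (Sum.inl '' (Sum.inl ⁻¹' Y) : Set (B.Evt ⊕ C.Evt)) =
            Sum.inl ⁻¹' Y := Set.preimage_image_eq _ Sum.inl_injective
        exact h3 ▸ this.1
      · have hsub : (Sum.inr '' (Sum.inr ⁻¹' Y) : Set (A.Evt ⊕ C.Evt)) ⊆
            insert (Sum.inr c₀) L := by
          rintro - ⟨c', hc', rfl⟩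
          rcases hY hc' with h | h
          · exact Or.inl (by rw [Sum.inr_injective h])
          · exact Or.inr ((hCpart c').1 h)
        have := hcfg.2.1 _ hsub ((hYfin.preimage (Sum.inr_injective.injOn)).image _)
        have h3 : Sum.inr ⁻¹' (Sum.inr '' (Sum.inr ⁻¹' Y) : Set (A.Evt ⊕ C.Evt)) =
            Sum.inr ⁻¹' Y := Set.preimage_image_eq _ Sum.inr_injective
        exact h3 ▸ this.2
    · intro e he e' hle
      rcases he with he | he
      · subst he
        cases e' with
        | inr c' =>
          by_cases hcc : c' = c₀
          · exact Or.inl (by rw [hcc])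
          · have := hcfg.2.2 (Sum.inr c₀) (Set.mem_insert _ _) (Sum.inr c') hle
            rcases this with h | h
            · exact absurd (Sum.inr_injective h) hcc
            · exact Or.inr ((hCpart c').2 h)
        | inl b => exact absurd hle par_le_lr
      · exact Or.inr (hbase.2.2 e he e' hle)
  -- apply receptivity of τ
  obtain ⟨tN, ⟨ht1, ht2, ht3⟩, htuniq⟩ := hτr yT hyT (Sum.inr c₀) hpolτ hnot hcfgT
  set pN : IPt A C S T := (Sum.inr c₀, Sum.inr tN) with hpNdef
  set Wex : Set (IPt A C S T) := insert pN W with hWexdef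
  have htNy : Sum.inr tN ∉ (Prod.snd '' W : Set (A.Evt ⊕ T.Evt)) := ht1
  have hc₀z : Sum.inr c₀ ∉ (Prod.fst '' W : Set (S.Evt ⊕ C.Evt)) := by
    intro h
    exact hnin (label_inr_of_fst hσ hτ hx h)
  have hfst : (Prod.fst : IPt A C S T → S.Evt ⊕ C.Evt) '' Wex =
      insert (Sum.inr c₀) (Prod.fst '' W) := Set.image_insert_eq
  have hsnd : (Prod.snd : IPt A C S T → A.Evt ⊕ T.Evt) '' Wex =
      insert (Sum.inr tN) (Prod.snd '' W) := Set.image_insert_eq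
  have hfstcfg0 : (S.toES.par C.toES).Config
      (insert (Sum.inr c₀ : S.Evt ⊕ C.Evt)
        ((Prod.fst : IPt A C S T → S.Evt ⊕ C.Evt) '' W)) := by
    refine config_par_mk ?_ ?_
    · have h1 : (Sum.inl ⁻¹' (insert (Sum.inr c₀) (Prod.fst '' W)) : Set S.Evt) =
          Sum.inl ⁻¹' (Prod.fst '' W) := by
        ext s; simp
      erw [h1]; exact config_par_inl hzcfg
    · have h1 : (Sum.inr ⁻¹' (insert (Sum.inr c₀) (Prod.fst '' W)) : Set C.Evt) =
          insert c₀ zC := by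
        ext c; simp [zC]
      have h2 : insert c₀ zC = Sum.inr ⁻¹' (insert (Sum.inr c₀) L) := by
        ext c
        constructor
        · rintro (rfl | h)
          · exact Or.inl rfl
          · exact Or.inr (label_inr_of_fst hσ hτ hx h)
        · rintro (h | h)
          · exact Or.inl (Sum.inr_injective h)
          · exact Or.inr (fst_of_label_inr h)
      erw [h1, h2]
      exact config_par_inr hcfg
  have hfstcfg : (S.toES.par C.toES).Config
      ((Prod.fst : IPt A C S T → S.Evt ⊕ C.Evt) '' Wex) := by
    erw [hfst]; exact hfstcfg0
  have hsndcfg0 : (A.toES.par T.toES).Config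
      (insert (Sum.inr tN : A.Evt ⊕ T.Evt)
        ((Prod.snd : IPt A C S T → A.Evt ⊕ T.Evt) '' W)) := by
    refine config_par_mk ?_ ?_
    · have h1 : (Sum.inl ⁻¹' (insert (Sum.inr tN) (Prod.snd '' W)) : Set A.Evt) =
          Sum.inl ⁻¹' (Prod.snd '' W) := by
        ext a; simp
      erw [h1]; exact config_par_inl hycfg
    · have h1 : (Sum.inr ⁻¹' (insert (Sum.inr tN) (Prod.snd '' W)) : Set T.Evt) =
          insert tN yT := by
        ext t; simp [yT]
      erw [h1]; exact ht2
  have hsndcfg : (A.toES.par T.toES).Config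
      ((Prod.snd : IPt A C S T → A.Evt ⊕ T.Evt) '' Wex) := by
    erw [hsnd]; exact hsndcfg0
  have hlabN : lmap A B C S σ pN.1 = rmap A B C T τ pN.2 := by
    simp [lmap, rmap, Sum.map, ht3, hpNdef]; rfl
  have hlabs : ∀ p ∈ Wex, lmap A B C S σ p.1 = rmap A B C T τ p.2 := by
    intro p hp
    rcases Set.mem_insert_iff.1 hp with rfl | hpW
    · exact hlabN
    · exact hW.2.2.1 p hpW
  have hnosucc : ∀ q, ¬ IRel Wex pN q := by
    rintro q ⟨-, hq, hlt | hlt⟩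
    · obtain ⟨hle, hne⟩ := hlt
      cases hq1 : q.1 with
      | inr c₁ =>
        rw [hq1] at hle hne
        rcases Set.mem_insert_iff.1 hq with rfl | hqW
        · exact hne hq1
        · have hmem : c₁ ∈ zC := ⟨q, hqW, hq1⟩
          exact hc₀z (hzC.2.2 c₁ hmem c₀ hle)
      | inl s => rw [hq1] at hle; exact par_le_rl hle
    · obtain ⟨hle, hne⟩ := hlt
      cases hq2 : q.2 with
      | inr t₁ =>
        rw [hq2] at hle hne
        rcases Set.mem_insert_iff.1 hq with rfl | hqW
        · exact hne hq2
        · have hmem : t₁ ∈ yT := ⟨q, hqW, hq2⟩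
          exact htNy (hyT.2.2 t₁ hmem tN hle)
      | inl a => rw [hq2] at hle; exact par_le_rl hle
  have hchainfix : ∀ q, Relation.ReflTransGen (IRel Wex) pN q → q = pN := by
    intro q hq
    rcases hq.cases_head with h | ⟨r, hr, -⟩
    · exact h.symm
    · exact absurd hr (hnosucc r)
  have hrestrict : ∀ u v, Relation.ReflTransGen (IRel Wex) u v →
      v = pN ∨ Relation.ReflTransGen (IRel W) u v := by
    intro u v huv
    induction huv using Relation.ReflTransGen.head_induction_on with
    | refl => exact Or.inr Relation.ReflTransGen.refl
    | @head p r hpr hrv ih =>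
      rcases ih with rfl | ih
      · exact Or.inl rfl
      · by_cases hrp : r = pN
        · subst hrp; exact Or.inl (hchainfix _ hrv)
        · have hpW : p ∈ W := by
            rcases Set.mem_insert_iff.1 hpr.1 with heq | h
            · exact absurd (heq ▸ hpr) (hnosucc r)
            · exact h
          have hrW : r ∈ W := by
            rcases Set.mem_insert_iff.1 hpr.2.1 with h | h
            · exact absurd h hrp
            · exact h
          exact Or.inr (Relation.ReflTransGen.head ⟨hpW, hrW, hpr.2.2⟩ ih)
  have hWex : Good A B C S T σ τ Wex := by
    refine ⟨hfstcfg, hsndcfg, hlabs, ?_, images_eq_of_labels hlabs, ?_⟩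
    · -- closure
      intro s hs t ht hlab
      obtain ⟨q, hq, rfl⟩ := hs
      obtain ⟨q', hq', rfl⟩ := ht
      rcases Set.mem_insert_iff.1 hq with rfl | hqW
      · rcases Set.mem_insert_iff.1 hq' with rfl | hq'W
        · exact Set.mem_insert _ _
        · -- q' old with label inr c₀
          have hr : rmap A B C T τ q'.2 = Sum.inr c₀ := by
            rw [← hlab]; simp [lmap, Sum.map, hpNdef]
          cases hq'2 : q'.2 with
          | inl a' =>
            rw [hq'2] at hr
            simp [rmap] at hr
          | inr t' =>
            rw [hq'2] at hr
            cases htt : τ t' with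
            | inl b => simp [rmap, htt] at hr
            | inr c' =>
              have hcc : c' = c₀ := by simpa [rmap, htt] using hr
              subst hcc
              exact absurd ((hCpart c').1 ⟨t', ⟨q', hq'W, hq'2⟩, htt⟩) hnin
      · rcases Set.mem_insert_iff.1 hq' with rfl | hq'W
        · -- q old with label inr c₀: impossible
          have hls : lmap A B C S σ q.1 = Sum.inr c₀ := by
            rw [hlab]; simp [rmap, ht3, hpNdef]; rfl
          cases hq1 : q.1 with
          | inl s' =>
            rw [hq1] at hls
            cases hss : σ s' with
            | inl a => simp [lmap, Sum.map, hss] at hls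
            | inr b => simp [lmap, Sum.map, hss] at hls
          | inr c' =>
            rw [hq1] at hls
            have hcc : c' = c₀ := by simpa [lmap, Sum.map] using hls
            subst hcc
            exact absurd ⟨q, hqW, hq1⟩ hc₀z
        · exact Set.mem_insert_of_mem _ (hW.2.2.2.1 q.1 ⟨q, hqW, rfl⟩ q'.2 ⟨q', hq'W, rfl⟩ hlab)
    · -- secured
      intro p q hpq hqp
      by_cases hp : p = pN
      · subst hp; exact (hchainfix q hpq).symm
      · by_cases hq : q = pN
        · subst hq; exact hchainfix p hqp
        · rcases hrestrict p q hpq with h | h1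
          · exact absurd h hq
          · rcases hrestrict q p hqp with h | h2
            · exact absurd h hp
            · exact hW.2.2.2.2.2 p q h1 h2
  -- build the new event
  have hpNWex : pN ∈ Wex := Set.mem_insert _ _
  have hGoodN : Good A B C S T σ τ (primeOf Wex pN) :=
    good_of_dcl hσ hτ hWex primeOf_dcl
  have hPrimeN : IsPrime (S.toES.par C.toES) (A.toES.par T.toES) (primeOf Wex pN) :=
    ⟨pN, mem_primeOf_self hpNWex, primeOf_top⟩
  have hvisN : lmap A B C S σ pN.1 =
      Sum.map Sum.inl id (Sum.inr c₀ : A.Evt ⊕ C.Evt) := by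
    simp [lmap, Sum.map, hpNdef]
  have hvisHN : compVis A B C S T σ τ ⟨primeOf Wex pN, hGoodN, hPrimeN⟩ :=
    ⟨pN, mem_primeOf_self hpNWex, primeOf_top, Sum.inr c₀, hvisN⟩
  set HN : (compES A B C S T σ τ).Evt :=
    ⟨⟨primeOf Wex pN, hGoodN, hPrimeN⟩, hvisHN⟩ with hHNdef
  have hHNlab : compLabel A B C S T σ τ HN = Sum.inr c₀ :=
    compLabel_eq _ (mem_primeOf_self hpNWex) primeOf_top hvisN
  have hdclmem : ∀ H' ∈ insert HN x, Dcl Wex (H'.val.val : Set (IPt A C S T)) := by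
    intro H' hH'
    rcases Set.mem_insert_iff.1 hH' with rfl | hH'x
    · exact primeOf_dcl
    · exact dcl_of_good hσ hτ hWex (evt_good H'.val)
        ((subset_UX hH'x).trans (Set.subset_insert _ _))
  have hPredT : ∀ u, T.toES.lt u tN → u ∈ yT := by
    intro u hu
    have := ht2.2.2 tN (Set.mem_insert _ _) u hu.1
    rcases Set.mem_insert_iff.1 this with rfl | h
    · exact absurd rfl hu.2
    · exact h
  refine ⟨HN, ⟨?_, ?_, hHNlab⟩, ?_⟩
  · intro hmem
    exact hnin ⟨HN, hmem, hHNlab⟩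
  · refine ⟨hx.1.insert _, ?_, ?_⟩
    · intro Y hY hYfin
      have hdcl : Dcl Wex (UX Y) := dcl_union (fun H' hH' => hdclmem H' (hY hH'))
      have hgood : Good A B C S T σ τ (UX Y) := good_of_dcl hσ hτ hWex hdcl
      exact con_of_good hYfin hgood
    · intro H hH H' hle
      rcases Set.mem_insert_iff.1 hH with rfl | hHx
      · by_cases hpm : pN ∈ (H'.val.val : Set (IPt A C S T))
        · have h1 : primeOf Wex pN ⊆ H'.val.val :=
            primeOf_subset_of_dcl
              (dcl_of_good hσ hτ hWex (evt_good H'.val)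
                (Set.Subset.trans hle primeOf_dcl.1)) hpm
          have : H' = HN :=
            Subtype.ext (Subtype.ext (Set.Subset.antisymm hle h1))
          exact this ▸ Set.mem_insert _ _
        · have hsubW : (H'.val.val : Set (IPt A C S T)) ⊆ W := by
            intro q hq
            rcases Set.mem_insert_iff.1 (primeOf_dcl.1 (hle hq)) with rfl | h
            · exact absurd hq hpm
            · exact h
          obtain ⟨q', hq', htop'⟩ := evt_prime H'.val
          obtain ⟨H₀, hH₀, hqH₀⟩ := mem_UX.1 (hsubW hq')
          have h2 : (H'.val.val : Set (IPt A C S T)) ⊆ H₀.val.val := by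
            rw [primeOf_eq (dcl_of_good hσ hτ hW (evt_good H'.val) hsubW) hq' htop']
            exact primeOf_subset_of_dcl
              (dcl_of_good hσ hτ hW (evt_good H₀.val) (subset_UX hH₀)) hqH₀
          exact Set.mem_insert_of_mem _ (hx.2.2 H₀ hH₀ H' h2)
      · exact Set.mem_insert_of_mem _ (hx.2.2 H hHx H' hle)
  · -- uniqueness
    intro H hH
    obtain ⟨hH1, hH2, hH3⟩ := hH
    have hW' : Good A B C S T σ τ (UX (insert H x)) := config_UX_good hH2
    set W' := UX (insert H x) with hW'def
    have hWW' : W ⊆ W' := UX_mono (Set.subset_insert _ _)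
    have hHW' : (H.val.val : Set (IPt A C S T)) ⊆ W' := subset_UX (Set.mem_insert _ _)
    obtain ⟨p', hp', htop', hl'⟩ := compLabel_spec H
    rw [hH3] at hl'
    obtain ⟨t'', hp'1, hp'2, hτt''⟩ :
        ∃ t'', p'.1 = Sum.inr c₀ ∧ p'.2 = Sum.inr t'' ∧ τ t'' = Sum.inr c₀ := by
      rcases shape ((evt_good H.val).2.2.1 p' hp') with
        ⟨s'', a', h1, h2, h3⟩ | ⟨s'', t', b, h1, h2, h3, h4⟩ | ⟨c', t', h1, h2, h3⟩
      · rw [h1] at hl'; simp [lmap, Sum.map, Function.comp, h3] at hl'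
      · rw [h1] at hl'; simp [lmap, Sum.map, Function.comp, h3] at hl'
      · rw [h1] at hl'
        simp only [lmap, Sum.map, Sum.elim_inr, Function.comp, id] at hl'
        have hcc : c' = c₀ := Sum.inr_injective hl'
        subst hcc
        exact ⟨t', h1, h2, h3⟩
    have hp'pN : p' = (Sum.inr c₀, Sum.inr t'') := Prod.ext hp'1 hp'2
    have ht''W' : Sum.inr t'' ∈ (Prod.snd '' W' : Set (A.Evt ⊕ T.Evt)) :=
      ⟨p', hHW' hp', hp'2⟩
    have hy'cfg : (A.toES.par T.toES).Config (Prod.snd '' W') := hW'.2.1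
    have hy'T : T.toES.Config (Sum.inr ⁻¹' (Prod.snd '' W')) := config_par_inr hy'cfg
    have ht''notin : t'' ∉ yT := by
      intro hmem
      exact hnin ((hCpart c₀).1 ⟨t'', hmem, hτt''⟩)
    have hPred : ∀ u, T.toES.lt u t'' → u ∈ yT := by
      intro u hu
      obtain ⟨w, huw, hw⟩ := le_imc_of_lt hT hu
      have hpolT : T.pol t'' = false := by
        have h := hτ.2 t''
        rw [hτt''] at h
        rw [← h]
        simp [ESP.par, ESP.dual, hpol]
      have himcBC : (B.dual.par C).toES.imc (τ w) (τ t'') := by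
        refine hτc w t'' hw ?_
        intro hpair
        rw [Prod.mk.injEq] at hpair
        rw [hpair.2] at hpolT
        exact Bool.true_eq_false.mp hpolT
      rw [hτt''] at himcBC
      obtain ⟨c₁, hwc, himc⟩ :=
        par_imc_inr' (E := B.toES) (F := C.toES) himcBC
      have hwy' : w ∈ Sum.inr ⁻¹' (Prod.snd '' W' : Set (A.Evt ⊕ T.Evt)) := by
        have ht''y' : t'' ∈ Sum.inr ⁻¹' (Prod.snd '' W' : Set (A.Evt ⊕ T.Evt)) := ht''W'
        exact hy'T.2.2 t'' ht''y' w hw.1.1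
      obtain ⟨q_w, hq_wW', hq_w2⟩ := hwy'
      have hq_wlab : lmap A B C S σ q_w.1 =
          Sum.map Sum.inl id (Sum.inr c₁ : A.Evt ⊕ C.Evt) := by
        rw [hW'.2.2.1 q_w hq_wW', hq_w2]
        simp [rmap, Sum.map, hwc]
      obtain ⟨H₁, hH₁mem, hH₁val, hH₁lab⟩ :=
        mem_label_of_vis hσ hτ hH2 hq_wW' hq_wlab
      have hH₁x : H₁ ∈ x := by
        rcases Set.mem_insert_iff.1 hH₁mem with rfl | hmem
        · rw [hH3] at hH₁lab
          exact absurd (Sum.inr_injective hH₁lab).symm himc.1.2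
        · exact hmem
      have hq_wW : q_w ∈ W := by
        have : q_w ∈ (H₁.val.val : Set (IPt A C S T)) := by
          rw [hH₁val]; exact mem_primeOf_self hq_wW'
        exact subset_UX hH₁x this
      have hwyT : w ∈ yT := ⟨q_w, hq_wW, hq_w2⟩
      exact hyT.2.2 w hwyT u huw
    have hyTsub : insert t'' yT ⊆ Sum.inr ⁻¹' (Prod.snd '' W' : Set (A.Evt ⊕ T.Evt)) := by
      intro u hu
      rcases Set.mem_insert_iff.1 hu with rfl | hu
      · exact ht''W'
      · obtain ⟨q, hq, hq2⟩ := hu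
        exact ⟨q, hWW' hq, hq2⟩
    have hcfg'' : T.toES.Config (insert t'' yT) := by
      refine ⟨hyT.1.insert _, ?_, ?_⟩
      · intro Y hY hYfin
        exact hy'T.2.1 Y (hY.trans hyTsub) hYfin
      · intro e he u hue
        rcases Set.mem_insert_iff.1 he with rfl | he
        · by_cases hus : u = e
          · exact hus ▸ Set.mem_insert _ _
          · exact Set.mem_insert_of_mem _ (hPred u ⟨hue, hus⟩)
        · exact Set.mem_insert_of_mem _ (hyT.2.2 e he u hue)
    have hteq : t'' = tN := htuniq t'' ⟨ht''notin, hcfg'', hτt''⟩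
    subst hteq
    have hp'eq : p' = pN := hp'pN
    rw [hp'eq] at hp' htop'
    have hdclWex : Dcl W' Wex := by
      constructor
      · intro q hq
        rcases Set.mem_insert_iff.1 hq with rfl | h
        · exact hHW' hp'
        · exact hWW' h
      · intro r v hrv hv
        rcases Set.mem_insert_iff.1 hv with rfl | hvW
        · rcases hrv.2.2 with ⟨hle, hne⟩ | ⟨hle, hne⟩
          · cases hr1 : r.1 with
            | inr c₁ =>
              rw [hr1] at hle hne
              have hc₁ : Sum.inr c₁ ∈ insert (Sum.inr c₀ : A.Evt ⊕ C.Evt) L := by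
                refine hcfg.2.2 (Sum.inr c₀) (Set.mem_insert _ _) (Sum.inr c₁) hle
              rcases Set.mem_insert_iff.1 hc₁ with heq | hmem
              · exact absurd (by rw [(Sum.inr_injective heq : c₁ = c₀)] :
                  Sum.inr c₁ = pN.1) hne
              · obtain ⟨r₀, hr₀, hr₀1⟩ := fst_of_label_inr hmem
                have : r₀ = r :=
                  good_fst_inj hτ hW' r₀ (hWW' hr₀) r hrv.1 (by rw [hr₀1, hr1])
                exact Set.mem_insert_of_mem _ (this ▸ hr₀)
            | inl s => rw [hr1] at hle; exact absurd hle par_le_lr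
          · cases hr2 : r.2 with
            | inr t₁ =>
              rw [hr2] at hle hne
              have ht₁ : t₁ ∈ yT :=
                hPred t₁ ⟨hle, fun h => hne (by rw [h])⟩
              obtain ⟨r₀, hr₀, hr₀2⟩ := ht₁
              have : r₀ = r :=
                good_snd_inj hσ hW' r₀ (hWW' hr₀) r hrv.1 (by rw [hr₀2, hr2])
              exact Set.mem_insert_of_mem _ (this ▸ hr₀)
            | inl a => rw [hr2] at hle; exact absurd hle par_le_lr
        · exact Set.mem_insert_of_mem _
            ((dcl_of_good hσ hτ hW' hW hWW').2 r v hrv hvW)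
    have hsubWex : (H.val.val : Set (IPt A C S T)) ⊆ Wex := by
      rw [primeOf_eq (dcl_of_good hσ hτ hW' (evt_good H.val) hHW') hp' htop']
      exact primeOf_subset_of_dcl hdclWex hpNWex
    have hfinal : (H.val.val : Set (IPt A C S T)) = primeOf Wex pN := by
      apply Set.Subset.antisymm
      · intro q hq
        exact ⟨hsubWex hq, rtg_mono hsubWex (htop' q hq)⟩
      · exact primeOf_subset_of_dcl
          (dcl_of_good hσ hτ hWex (evt_good H.val) hsubWex) hp'
    exact Subtype.ext (Subtype.ext hfinal)

end ReceptC
end CompAux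
namespace CompAux
open Relation Set Sum
section Court
variable {A B C S T : ESP} {σ : S.Evt → A.Evt ⊕ B.Evt} {τ : T.Evt → B.Evt ⊕ C.Evt}

theorem comp_receptive (hA : A.toES.IsES) (hC : C.toES.IsES)
    (hS : S.toES.IsES) (hT : T.toES.IsES)
    (hσ : IsPreStrategy S (A.dual.par B) σ) (hτ : IsPreStrategy T (B.dual.par C) τ)
    (hσr : Receptive S (A.dual.par B) σ) (hσc : Courteous S (A.dual.par B) σ)
    (hτr : Receptive T (B.dual.par C) τ) (hτc : Courteous T (B.dual.par C) τ) :
    Receptive (compESP A B C S T σ τ) (A.dual.par C)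
      (compLabel A B C S T σ τ) := by
  intro x hx a hpol hnin hcfg
  cases a with
  | inl a₀ =>
    have hpolA : A.pol a₀ = true := by
      have h' : (!A.pol a₀) = false := hpol; simpa [ESP.par, ESP.dual] using h'
    exact recept_inl hA hS hσ hτ hσr hσc hx hpolA hnin hcfg
  | inr c₀ =>
    have hpolC : C.pol c₀ = false := by
      simpa [ESP.par, ESP.dual] using (hpol : C.pol c₀ = false)
    exact recept_inr hC hT hσ hτ hτr hτc hx hpolC hnin hcfg

/-- Classification of a visible point. -/
theorem vis_shape {W : Set (IPt A C S T)} (hW : Good A B C S T σ τ W)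
    {q : IPt A C S T} (hq : q ∈ W) {e : A.Evt ⊕ C.Evt}
    (he : lmap A B C S σ q.1 = Sum.map Sum.inl id e) :
    (∃ s a, e = Sum.inl a ∧ q = (Sum.inl s, Sum.inl a) ∧ σ s = Sum.inl a) ∨
    (∃ c t, e = Sum.inr c ∧ q = (Sum.inr c, Sum.inr t) ∧ τ t = Sum.inr c) := by
  rcases shape (hW.2.2.1 q hq) with
    ⟨s, a, h1, h2, h3⟩ | ⟨s, t, b, h1, h2, h3, h4⟩ | ⟨c, t, h1, h2, h3⟩
  · left
    refine ⟨s, a, ?_, Prod.ext h1 h2, h3⟩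
    apply map_inl_id_inj (e := e) (e' := Sum.inl a)
    rw [← he, h1]
    simp [lmap, Sum.map, h3]
  · exfalso
    rw [h1] at he
    cases e with
    | inl a => simp [lmap, Sum.map, Function.comp, h3] at he
    | inr c => simp [lmap, Sum.map, Function.comp, h3] at he
  · right
    refine ⟨c, t, ?_, Prod.ext h1 h2, h3⟩
    apply map_inl_id_inj (e := e) (e' := Sum.inr c)
    rw [← he, h1]
    simp [lmap, Sum.map]

theorem comp_courteous (hA : A.toES.IsES) (hC : C.toES.IsES)
    (hS : S.toES.IsES) (hT : T.toES.IsES)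
    (hσ : IsPreStrategy S (A.dual.par B) σ) (hτ : IsPreStrategy T (B.dual.par C) τ)
    (hσc : Courteous S (A.dual.par B) σ) (hτc : Courteous T (B.dual.par C) τ) :
    Courteous (compESP A B C S T σ τ) (A.dual.par C)
      (compLabel A B C S T σ τ) := by
  intro H H' himc hpolpair
  obtain ⟨⟨hle, hne⟩, himm⟩ := himc
  have hW' : Good A B C S T σ τ (H'.val.val : Set (IPt A C S T)) := evt_good H'.val
  set W' : Set (IPt A C S T) := H'.val.val with hW'def
  have hsec : SecuredOn (S.toES.par C.toES) (A.toES.par T.toES) W' := hW'.2.2.2.2.2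
  obtain ⟨p, hp, htop, hl⟩ := compLabel_spec H
  obtain ⟨p', hp', htop', hl'⟩ := compLabel_spec H'
  have hsub : (H.val.val : Set (IPt A C S T)) ⊆ W' := hle
  have hdclH : Dcl W' (H.val.val : Set (IPt A C S T)) :=
    dcl_of_good hσ hτ hW' (evt_good H.val) hsub
  have hHeq : (H.val.val : Set (IPt A C S T)) = primeOf W' p := primeOf_eq hdclH hp htop
  have hpW' : p ∈ W' := hsub hp
  have hirrefl : ∀ q, ¬ IRel W' q q := by
    rintro q ⟨-, -, ⟨-, h⟩ | ⟨-, h⟩⟩ <;> exact h rfl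
  have hnotback : ∀ q, Relation.ReflTransGen (IRel W') p q → IRel W' q p → False := by
    intro q hpq hqp
    have : q = p := hsec q p (Relation.ReflTransGen.single hqp) hpq
    exact hirrefl p (this ▸ hqp)
  have hpp' : p ≠ p' := by
    intro h
    apply hne
    refine Subtype.ext (Subtype.ext ?_)
    apply Set.Subset.antisymm hsub
    intro q hq
    rw [hHeq]
    exact ⟨hq, h ▸ htop' q hq⟩
  -- no strictly intermediate visible point
  have step1 : ∀ q ∈ W', Relation.ReflTransGen (IRel W') p q →
      Relation.ReflTransGen (IRel W') q p' →
      (∃ e, lmap A B C S σ q.1 = Sum.map Sum.inl id e) → q = p ∨ q = p' := by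
    intro q hq hpq hqp' ⟨e, hevis⟩
    have hGoodq : Good A B C S T σ τ (primeOf W' q) :=
      good_of_dcl hσ hτ hW' primeOf_dcl
    have hPrimeq : IsPrime (S.toES.par C.toES) (A.toES.par T.toES) (primeOf W' q) :=
      ⟨q, mem_primeOf_self hq, primeOf_top⟩
    have hvisq : compVis A B C S T σ τ ⟨primeOf W' q, hGoodq, hPrimeq⟩ :=
      ⟨q, mem_primeOf_self hq, primeOf_top, e, hevis⟩
    set Hq : (compES A B C S T σ τ).Evt := ⟨⟨primeOf W' q, hGoodq, hPrimeq⟩, hvisq⟩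
    have hle1 : (H.val.val : Set (IPt A C S T)) ⊆ primeOf W' q := by
      rw [hHeq]
      rintro r ⟨hrW, hrp⟩
      exact ⟨hrW, hrp.trans hpq⟩
    have hle2 : primeOf W' q ⊆ W' := primeOf_dcl.1
    rcases himm Hq hle1 hle2 with heq | heq
    · left
      have hval : primeOf W' q = (H.val.val : Set (IPt A C S T)) :=
        congrArg (fun G => G.val.val) heq
      rw [hHeq] at hval
      have hqt : ∀ r ∈ primeOf W' p, Relation.ReflTransGen (IRel (primeOf W' p)) r q := by
        rw [← hval]; exact primeOf_top
      have hpt : ∀ r ∈ primeOf W' p, Relation.ReflTransGen (IRel (primeOf W' p)) r p :=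
        primeOf_top
      exact top_unique (secured_subset hsec primeOf_dcl.1)
        (hval ▸ mem_primeOf_self hq) hqt (mem_primeOf_self hpW') hpt
    · right
      have hval : primeOf W' q = W' := congrArg (fun G => G.val.val) heq
      have hqt : ∀ r ∈ W', Relation.ReflTransGen (IRel W') r q := by
        intro r hr
        have hr' : r ∈ primeOf W' q := hval.symm ▸ hr
        exact rtg_mono primeOf_dcl.1 (primeOf_top r hr')
      exact hsec q p' (htop' q hq) (hqt p' hp')
  -- every point on the chain can be taken invisible
  set InvB : IPt A C S T → Prop :=
    fun q => ∃ s t b, q = (Sum.inl s, Sum.inr t) ∧ σ s = Sum.inr b ∧ τ t = Sum.inl b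
    with hInvB
  have hvis_or_inv : ∀ q ∈ W', InvB q ∨
      ∃ e, lmap A B C S σ q.1 = Sum.map Sum.inl id e := by
    intro q hq
    rcases shape (hW'.2.2.1 q hq) with
      ⟨s, a, h1, h2, h3⟩ | ⟨s, t, b, h1, h2, h3, h4⟩ | ⟨c, t, h1, h2, h3⟩
    · exact Or.inr ⟨Sum.inl a, by rw [h1]; simp [lmap, Sum.map, h3]⟩
    · exact Or.inl ⟨s, t, b, Prod.ext h1 h2, h3, h4⟩
    · exact Or.inr ⟨Sum.inr c, by rw [h1]; simp [lmap, Sum.map]⟩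
  have hchain : ∀ q, Relation.ReflTransGen (IRel W') q p' →
      Relation.ReflTransGen (IRel W') p q →
      Relation.ReflTransGen (fun u v => IRel W' u v ∧ (InvB v ∨ v = p')) q p' := by
    intro q hq
    induction hq using Relation.ReflTransGen.head_induction_on with
    | refl => intro _; exact Relation.ReflTransGen.refl
    | @head u r hur hrp' ih =>
      intro hpu
      have hpr : Relation.ReflTransGen (IRel W') p r := hpu.tail hur
      have htag : InvB r ∨ r = p' := by
        by_cases hrp'eq : r = p'
        · exact Or.inr hrp'eq
        · rcases hvis_or_inv r hur.2.1 with h | h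
          · exact Or.inl h
          · rcases step1 r hur.2.1 hpr hrp' h with rfl | h2
            · exact absurd hur (fun hh => hnotback u hpu hh)
            · exact Or.inr h2
      exact Relation.ReflTransGen.head ⟨hur, htag⟩ (ih hpr)
  have hmainchain :
      Relation.ReflTransGen (fun u v => IRel W' u v ∧ (InvB v ∨ v = p')) p p' :=
    hchain p (htop' p hpW') Relation.ReflTransGen.refl
  -- immediacy transfer lemmas
  have immA : ∀ s_p a₁ s' a₀', p = (Sum.inl s_p, Sum.inl a₁) →
      p' = (Sum.inl s', Sum.inl a₀') → A.toES.lt a₁ a₀' → A.toES.imc a₁ a₀' := by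
    intro s_p a₁ s' a₀' hpe hp'e hlt
    refine ⟨hlt, ?_⟩
    intro a_m h1 h2
    by_cases hm1 : a_m = a₁
    · exact Or.inl hm1
    by_cases hm2 : a_m = a₀'
    · exact Or.inr hm2
    exfalso
    have hyA' : A.toES.Config (Sum.inl ⁻¹' (Prod.snd '' W')) := config_par_inl hW'.2.1
    have ha₀'y : a₀' ∈ Sum.inl ⁻¹' (Prod.snd '' W' : Set (A.Evt ⊕ T.Evt)) :=
      ⟨p', hp', by rw [hp'e]⟩
    have ha_m : a_m ∈ Sum.inl ⁻¹' (Prod.snd '' W' : Set (A.Evt ⊕ T.Evt)) :=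
      hyA'.2.2 a₀' ha₀'y a_m h2
    obtain ⟨q_m, hq_m, hq_m2⟩ := ha_m
    rcases shape (hW'.2.2.1 q_m hq_m) with
      ⟨s_m, a_m', k1, k2, k3⟩ | ⟨s_m, t_m, b, k1, k2, k3, k4⟩ | ⟨c_m, t_m, k1, k2, k3⟩
    · have ham : a_m' = a_m := Sum.inl_injective (k2.symm.trans hq_m2)
      subst ham
      have hq_mvis : lmap A B C S σ q_m.1 =
          Sum.map Sum.inl id (Sum.inl a_m' : A.Evt ⊕ C.Evt) := by
        rw [k1]; simp [lmap, Sum.map, k3]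
      have hstepa : IRel W' p q_m :=
        ⟨hpW', hq_m, Or.inr (by
          rw [hpe, k2]
          exact ⟨h1, fun h => hm1 (Sum.inl_injective h).symm⟩)⟩
      have hstepb : IRel W' q_m p' :=
        ⟨hq_m, hp', Or.inr (by
          rw [hp'e, k2]
          exact ⟨h2, fun h => hm2 (Sum.inl_injective h)⟩)⟩
      rcases step1 q_m hq_m (Relation.ReflTransGen.single hstepa)
          (Relation.ReflTransGen.single hstepb) ⟨Sum.inl a_m', hq_mvis⟩ with heq | heq
      · rw [heq, hpe] at k2
        exact hm1 (Sum.inl_injective k2).symm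
      · rw [heq, hp'e] at k2
        exact hm2 (Sum.inl_injective k2).symm
    · rw [k2] at hq_m2; simp at hq_m2
    · rw [k2] at hq_m2; simp at hq_m2
  have immC : ∀ c₁ t_p c₀' t', p = (Sum.inr c₁, Sum.inr t_p) →
      p' = (Sum.inr c₀', Sum.inr t') → C.toES.lt c₁ c₀' → C.toES.imc c₁ c₀' := by
    intro c₁ t_p c₀' t' hpe hp'e hlt
    refine ⟨hlt, ?_⟩
    intro c_m h1 h2
    by_cases hm1 : c_m = c₁
    · exact Or.inl hm1
    by_cases hm2 : c_m = c₀'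
    · exact Or.inr hm2
    exfalso
    have hzC' : C.toES.Config (Sum.inr ⁻¹' (Prod.fst '' W')) := config_par_inr hW'.1
    have hc₀'z : c₀' ∈ Sum.inr ⁻¹' (Prod.fst '' W' : Set (S.Evt ⊕ C.Evt)) :=
      ⟨p', hp', by rw [hp'e]⟩
    have hc_m : c_m ∈ Sum.inr ⁻¹' (Prod.fst '' W' : Set (S.Evt ⊕ C.Evt)) :=
      hzC'.2.2 c₀' hc₀'z c_m h2
    obtain ⟨q_m, hq_m, hq_m1⟩ := hc_m
    rcases shape (hW'.2.2.1 q_m hq_m) with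
      ⟨s_m, a_m', k1, k2, k3⟩ | ⟨s_m, t_m, b, k1, k2, k3, k4⟩ | ⟨c_m', t_m, k1, k2, k3⟩
    · rw [k1] at hq_m1; simp at hq_m1
    · rw [k1] at hq_m1; simp at hq_m1
    · have hcm : c_m' = c_m := Sum.inr_injective (k1.symm.trans hq_m1)
      subst hcm
      have hq_mvis : lmap A B C S σ q_m.1 =
          Sum.map Sum.inl id (Sum.inr c_m' : A.Evt ⊕ C.Evt) := by
        rw [k1]; simp [lmap, Sum.map]
      have hstepa : IRel W' p q_m :=
        ⟨hpW', hq_m, Or.inl (by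
          rw [hpe, k1]
          exact ⟨h1, fun h => hm1 (Sum.inr_injective h).symm⟩)⟩
      have hstepb : IRel W' q_m p' :=
        ⟨hq_m, hp', Or.inl (by
          rw [hp'e, k1]
          exact ⟨h2, fun h => hm2 (Sum.inr_injective h)⟩)⟩
      rcases step1 q_m hq_m (Relation.ReflTransGen.single hstepa)
          (Relation.ReflTransGen.single hstepb) ⟨Sum.inr c_m', hq_mvis⟩ with heq | heq
      · rw [heq, hpe] at k1
        exact hm1 (Sum.inr_injective k1).symm
      · rw [heq, hp'e] at k1
        exact hm2 (Sum.inr_injective k1).symm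
  -- polarity disjunction
  have hpolor : (A.dual.par C).pol (compLabel A B C S T σ τ H) = true ∨
      (A.dual.par C).pol (compLabel A B C S T σ τ H') = false := by
    rcases Bool.eq_false_or_eq_true
        ((A.dual.par C).pol (compLabel A B C S T σ τ H)) with h1 | h1
    · exact Or.inl h1
    · rcases Bool.eq_false_or_eq_true
          ((A.dual.par C).pol (compLabel A B C S T σ τ H')) with h2 | h2
      · exfalso
        apply hpolpair
        have e1 : (compESP A B C S T σ τ).pol H = false := h1
        have e2 : (compESP A B C S T σ τ).pol H' = true := h2
        rw [e1, e2]
      · exact Or.inr h2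
  have hz'S : S.toES.Config (Sum.inl ⁻¹' (Prod.fst '' W')) := config_par_inl hW'.1
  have hy'T : T.toES.Config (Sum.inr ⁻¹' (Prod.snd '' W')) := config_par_inr hW'.2.1
  -- last-step and first-step decompositions of the main chain
  obtain ⟨r, hpr, hstepr⟩ :
      ∃ r, Relation.ReflTransGen (fun u v => IRel W' u v ∧ (InvB v ∨ v = p')) p r ∧
        (IRel W' r p' ∧ (InvB r ∨ r = p)) := by
    rcases Relation.ReflTransGen.cases_tail hmainchain with heq | ⟨r, hpr, hstep⟩
    · exact absurd heq.symm hpp'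
    · refine ⟨r, hpr, hstep.1, ?_⟩
      rcases Relation.ReflTransGen.cases_tail hpr with heq | ⟨b, -, hbr⟩
      · exact Or.inr heq
      · rcases hbr.2 with h | h
        · exact Or.inl h
        · subst h
          exact absurd hstep.1 (hirrefl r)
  obtain ⟨r₁, hstepr₁, hr₁p'⟩ :
      ∃ r₁, (IRel W' p r₁ ∧ (InvB r₁ ∨ r₁ = p')) ∧
        Relation.ReflTransGen (fun u v => IRel W' u v ∧ (InvB v ∨ v = p')) r₁ p' := by
    rcases Relation.ReflTransGen.cases_head hmainchain with heq | ⟨r₁, hs, ht⟩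
    · exact absurd heq hpp'
    · exact ⟨r₁, hs, ht⟩
  have hpRr : Relation.ReflTransGen (IRel W') p r :=
    Relation.ReflTransGen.mono (p := IRel W') (fun _ _ h => h.1) _ _ hpr
  have hr₁Rp' : Relation.ReflTransGen (IRel W') r₁ p' :=
    Relation.ReflTransGen.mono (p := IRel W') (fun _ _ h => h.1) _ _ hr₁p'
  -- shape analysis
  rcases vis_shape hW' hpW' hl with ⟨s_p, a₁, heP, hpe, hσp⟩ | ⟨c₁, t_p, heP, hpe, hτp⟩ <;>
    rcases vis_shape hW' hp' hl' with ⟨s', a₀', heP', hp'e, hσp'⟩ | ⟨c₀', t', heP', hp'e, hτp'⟩ <;>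
    rw [heP, heP'] <;>
    rcases hpolor with hpos | hneg
  -- Case (A, A), positive source
  · rw [heP] at hpos
    have hA1 : A.pol a₁ = false := by
      simpa [ESP.par, ESP.dual] using hpos
    have hpolSp : S.pol s_p = true := by
      have h := hσ.2 s_p
      rw [hσp] at h
      rw [← h]; simp [ESP.par, ESP.dual, hA1]
    rcases hstepr₁.1.2.2 with ⟨hle2, hne2⟩ | ⟨hle2, hne2⟩
    · -- E-step out of p
      rw [hpe] at hle2 hne2
      cases hr11 : r₁.1 with
      | inr c => rw [hr11] at hle2; exact absurd hle2 par_le_lr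
      | inl s₁ =>
        rw [hr11] at hle2 hne2
        have hlt1 : S.toES.lt s_p s₁ := ⟨hle2, fun h => hne2 (by rw [h])⟩
        obtain ⟨v, hvimc, hvs₁⟩ := imc_le_of_lt hS hlt1
        have himcσ := hσc s_p v hvimc (by
          intro hpair
          rw [Prod.mk.injEq] at hpair
          rw [hpair.1] at hpolSp
          exact Bool.false_ne_true hpolSp)
        rw [hσp] at himcσ
        obtain ⟨a₂, hσv, himcA⟩ := par_imc_inl (E := A.toES) (F := B.toES) himcσ
        have hs₁z : s₁ ∈ Sum.inl ⁻¹' (Prod.fst '' W' : Set (S.Evt ⊕ C.Evt)) :=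
          ⟨r₁, hstepr₁.1.2.1, hr11⟩
        have hvz : v ∈ Sum.inl ⁻¹' (Prod.fst '' W' : Set (S.Evt ⊕ C.Evt)) :=
          hz'S.2.2 s₁ hs₁z v hvs₁
        obtain ⟨q_v, hq_v, hq_v1⟩ := hvz
        have hq_vvis : lmap A B C S σ q_v.1 =
            Sum.map Sum.inl id (Sum.inl a₂ : A.Evt ⊕ C.Evt) := by
          rw [hq_v1]; simp [lmap, Sum.map, hσv]
        obtain ⟨s_v, a₂', hev, hq_ve, -⟩ | ⟨c_v, t_v, hev, hq_ve, -⟩ :=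
          vis_shape hW' hq_v hq_vvis
        swap
        · exact absurd hev (by simp)
        rw [(Sum.inl_injective hev.symm : a₂' = a₂)] at hq_ve
        have hpqv : IRel W' p q_v :=
          ⟨hpW', hq_v, Or.inl (by
            rw [hpe, hq_v1]
            exact ⟨hvimc.1.1, fun h => hvimc.1.2 (Sum.inl_injective h)⟩)⟩
        by_cases hv : v = s₁
        · subst hv
          have hq_vr₁ : q_v = r₁ :=
            good_fst_inj hτ hW' q_v hq_v r₁ hstepr₁.1.2.1 (by rw [hq_v1, hr11])
          rcases hstepr₁.2 with hInv | hrp'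
          · obtain ⟨s0, t0, b0, hre, -, -⟩ := hInv
            rw [← hq_vr₁, hq_ve] at hre
            simp [Prod.ext_iff] at hre
          · rw [← hq_vr₁] at hrp'
            rw [hrp', hp'e] at hq_ve
            rw [Prod.ext_iff] at hq_ve
            have ha : a₀' = a₂ := Sum.inl_injective hq_ve.2
            subst ha
            exact par_imc_of_ll (immA _ _ _ _ hpe hp'e himcA.1)
        · have hq_vr₁ : IRel W' q_v r₁ :=
            ⟨hq_v, hstepr₁.1.2.1, Or.inl (by
              rw [hq_v1, hr11]
              exact ⟨hvs₁, fun h => hv (Sum.inl_injective h)⟩)⟩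
          rcases step1 q_v hq_v (Relation.ReflTransGen.single hpqv)
              (Relation.ReflTransGen.head hq_vr₁ hr₁Rp') ⟨Sum.inl a₂, hq_vvis⟩ with heq | heq
          · rw [heq, hpe] at hq_v1
            exact absurd (Sum.inl_injective hq_v1) hvimc.1.2
          · have hcyc : r₁ = q_v := hsec r₁ q_v (heq ▸ hr₁Rp')
              (Relation.ReflTransGen.single hq_vr₁)
            rw [hcyc] at hq_vr₁
            exact absurd hq_vr₁ (hirrefl q_v)
    · -- F-step out of p
      rw [hpe] at hle2 hne2
      cases hr12 : r₁.2 with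
      | inr t => rw [hr12] at hle2; exact absurd hle2 par_le_lr
      | inl a₂ =>
        rw [hr12] at hle2 hne2
        rcases hstepr₁.2 with hInv | hrp'
        · obtain ⟨s0, t0, b0, hre, -, -⟩ := hInv
          rw [hre] at hr12
          simp at hr12
        · rw [hrp', hp'e] at hr12
          simp only at hr12
          have ha₀₂ : a₀' = a₂ := Sum.inl_injective hr12
          subst ha₀₂
          exact par_imc_of_ll (immA s_p a₁ s' a₀' hpe hp'e
            ⟨hle2, fun h => hne2 (by rw [h])⟩)
  -- Case (A, A), negative target
  · rw [heP'] at hneg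
    have hA0 : A.pol a₀' = true := by
      simpa [ESP.par, ESP.dual] using hneg
    have hpolS' : S.pol s' = false := by
      have h := hσ.2 s'
      rw [hσp'] at h
      rw [← h]; simp [ESP.par, ESP.dual, hA0]
    rcases hstepr.1.2.2 with ⟨hle2, hne2⟩ | ⟨hle2, hne2⟩
    · -- E-step into p'
      rw [hp'e] at hle2 hne2
      cases hr1 : r.1 with
      | inr c => rw [hr1] at hle2; exact absurd hle2 par_le_rl
      | inl s₁ =>
        rw [hr1] at hle2 hne2
        have hlt1 : S.toES.lt s₁ s' := ⟨hle2, fun h => hne2 (by rw [h])⟩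
        obtain ⟨u, hs₁u, humc⟩ := le_imc_of_lt hS hlt1
        have himcσ := hσc u s' humc (by
          intro hpair
          rw [Prod.mk.injEq] at hpair
          rw [hpair.2] at hpolS'
          exact Bool.true_eq_false.mp hpolS')
        rw [hσp'] at himcσ
        obtain ⟨a₂, hσu, himcA⟩ := par_imc_inl' (E := A.toES) (F := B.toES) himcσ
        have hs'z : s' ∈ Sum.inl ⁻¹' (Prod.fst '' W' : Set (S.Evt ⊕ C.Evt)) :=
          ⟨p', hp', by rw [hp'e]⟩
        have huz : u ∈ Sum.inl ⁻¹' (Prod.fst '' W' : Set (S.Evt ⊕ C.Evt)) :=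
          hz'S.2.2 s' hs'z u humc.1.1
        obtain ⟨q_u, hq_u, hq_u1⟩ := huz
        have hq_uvis : lmap A B C S σ q_u.1 =
            Sum.map Sum.inl id (Sum.inl a₂ : A.Evt ⊕ C.Evt) := by
          rw [hq_u1]; simp [lmap, Sum.map, hσu]
        obtain ⟨s_u, a₂', hev, hq_ue, -⟩ | ⟨c_u, t_u, hev, hq_ue, -⟩ :=
          vis_shape hW' hq_u hq_uvis
        swap
        · exact absurd hev (by simp)
        rw [(Sum.inl_injective hev.symm : a₂' = a₂)] at hq_ue
        have hq_up' : IRel W' q_u p' :=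
          ⟨hq_u, hp', Or.inl (by
            rw [hq_u1, hp'e]
            exact ⟨humc.1.1, fun h => humc.1.2 (Sum.inl_injective h)⟩)⟩
        by_cases hu : u = s₁
        · subst hu
          have hq_ur : q_u = r :=
            good_fst_inj hτ hW' q_u hq_u r hstepr.1.1 (by rw [hq_u1, hr1])
          rcases hstepr.2 with hInv | hrp
          · obtain ⟨s0, t0, b0, hre, -, -⟩ := hInv
            rw [← hq_ur, hq_ue] at hre
            simp [Prod.ext_iff] at hre
          · rw [← hq_ur] at hrp
            rw [hrp, hpe] at hq_ue
            rw [Prod.ext_iff] at hq_ue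
            have ha : a₁ = a₂ := Sum.inl_injective hq_ue.2
            subst ha
            exact par_imc_of_ll (immA _ _ _ _ hpe hp'e himcA.1)
        · have hrq_u : IRel W' r q_u :=
            ⟨hstepr.1.1, hq_u, Or.inl (by
              rw [hr1, hq_u1]
              exact ⟨hs₁u, fun h => hu (Sum.inl_injective h).symm⟩)⟩
          rcases step1 q_u hq_u (hpRr.tail hrq_u)
              (Relation.ReflTransGen.single hq_up') ⟨Sum.inl a₂, hq_uvis⟩ with heq | heq
          · subst heq
            exact (hnotback r hpRr hrq_u).elim
          · rw [heq, hp'e] at hq_u1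
            exact absurd (Sum.inl_injective hq_u1).symm humc.1.2
    · -- F-step into p'
      rw [hp'e] at hle2 hne2
      cases hr2 : r.2 with
      | inr t => rw [hr2] at hle2; exact absurd hle2 par_le_rl
      | inl a₂ =>
        rw [hr2] at hle2 hne2
        rcases hstepr.2 with hInv | hrp
        · obtain ⟨s0, t0, b0, hre, -, -⟩ := hInv
          rw [hre] at hr2
          simp at hr2
        · rw [hrp, hpe] at hr2
          simp only at hr2
          have ha₁₂ : a₁ = a₂ := Sum.inl_injective hr2
          subst ha₁₂
          exact par_imc_of_ll (immA s_p a₁ s' a₀' hpe hp'e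
            ⟨hle2, fun h => hne2 (by rw [h])⟩)
  -- Case (A, C), positive source : impossible
  · rw [heP] at hpos
    have hA1 : A.pol a₁ = false := by
      simpa [ESP.par, ESP.dual] using hpos
    have hpolSp : S.pol s_p = true := by
      have h := hσ.2 s_p
      rw [hσp] at h
      rw [← h]; simp [ESP.par, ESP.dual, hA1]
    rcases hstepr₁.1.2.2 with ⟨hle2, hne2⟩ | ⟨hle2, hne2⟩
    · rw [hpe] at hle2 hne2
      cases hr11 : r₁.1 with
      | inr c => rw [hr11] at hle2; exact absurd hle2 par_le_lr
      | inl s₁ =>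
        rw [hr11] at hle2 hne2
        have hlt1 : S.toES.lt s_p s₁ := ⟨hle2, fun h => hne2 (by rw [h])⟩
        obtain ⟨v, hvimc, hvs₁⟩ := imc_le_of_lt hS hlt1
        have himcσ := hσc s_p v hvimc (by
          intro hpair
          rw [Prod.mk.injEq] at hpair
          rw [hpair.1] at hpolSp
          exact Bool.false_ne_true hpolSp)
        rw [hσp] at himcσ
        obtain ⟨a₂, hσv, himcA⟩ := par_imc_inl (E := A.toES) (F := B.toES) himcσ
        have hs₁z : s₁ ∈ Sum.inl ⁻¹' (Prod.fst '' W' : Set (S.Evt ⊕ C.Evt)) :=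
          ⟨r₁, hstepr₁.1.2.1, hr11⟩
        have hvz : v ∈ Sum.inl ⁻¹' (Prod.fst '' W' : Set (S.Evt ⊕ C.Evt)) :=
          hz'S.2.2 s₁ hs₁z v hvs₁
        obtain ⟨q_v, hq_v, hq_v1⟩ := hvz
        have hq_vvis : lmap A B C S σ q_v.1 =
            Sum.map Sum.inl id (Sum.inl a₂ : A.Evt ⊕ C.Evt) := by
          rw [hq_v1]; simp [lmap, Sum.map, hσv]
        obtain ⟨s_v, a₂', hev, hq_ve, -⟩ | ⟨c_v, t_v, hev, hq_ve, -⟩ :=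
          vis_shape hW' hq_v hq_vvis
        swap
        · exact absurd hev (by simp)
        rw [(Sum.inl_injective hev.symm : a₂' = a₂)] at hq_ve
        have hpqv : IRel W' p q_v :=
          ⟨hpW', hq_v, Or.inl (by
            rw [hpe, hq_v1]
            exact ⟨hvimc.1.1, fun h => hvimc.1.2 (Sum.inl_injective h)⟩)⟩
        by_cases hv : v = s₁
        · subst hv
          have hq_vr₁ : q_v = r₁ :=
            good_fst_inj hτ hW' q_v hq_v r₁ hstepr₁.1.2.1 (by rw [hq_v1, hr11])
          rcases hstepr₁.2 with hInv | hrp'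
          · obtain ⟨s0, t0, b0, hre, -, -⟩ := hInv
            rw [← hq_vr₁, hq_ve] at hre
            simp [Prod.ext_iff] at hre
          · rw [← hq_vr₁] at hrp'
            rw [hrp', hp'e] at hq_ve
            simp [Prod.ext_iff] at hq_ve
        · have hq_vr₁ : IRel W' q_v r₁ :=
            ⟨hq_v, hstepr₁.1.2.1, Or.inl (by
              rw [hq_v1, hr11]
              exact ⟨hvs₁, fun h => hv (Sum.inl_injective h)⟩)⟩
          rcases step1 q_v hq_v (Relation.ReflTransGen.single hpqv)
              (Relation.ReflTransGen.head hq_vr₁ hr₁Rp') ⟨Sum.inl a₂, hq_vvis⟩ with heq | heq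
          · rw [heq, hpe] at hq_v1
            exact absurd (Sum.inl_injective hq_v1) hvimc.1.2
          · have hcyc : r₁ = q_v := hsec r₁ q_v (heq ▸ hr₁Rp')
              (Relation.ReflTransGen.single hq_vr₁)
            rw [hcyc] at hq_vr₁
            exact absurd hq_vr₁ (hirrefl q_v)
    · rw [hpe] at hle2 hne2
      cases hr12 : r₁.2 with
      | inr t => rw [hr12] at hle2; exact absurd hle2 par_le_lr
      | inl a₂ =>
        rw [hr12] at hle2 hne2
        rcases hstepr₁.2 with hInv | hrp'
        · obtain ⟨s0, t0, b0, hre, -, -⟩ := hInv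
          rw [hre] at hr12
          simp at hr12
        · rw [hrp', hp'e] at hr12
          simp at hr12
  -- Case (A, C), negative target : impossible
  · rw [heP'] at hneg
    have hC0 : C.pol c₀' = false := by
      simpa [ESP.par, ESP.dual] using hneg
    have hpolT' : T.pol t' = false := by
      have h := hτ.2 t'
      rw [hτp'] at h
      rw [← h]; simp [ESP.par, ESP.dual, hC0]
    rcases hstepr.1.2.2 with ⟨hle2, hne2⟩ | ⟨hle2, hne2⟩
    · rw [hp'e] at hle2 hne2
      cases hr1 : r.1 with
      | inl s₁ => rw [hr1] at hle2; exact absurd hle2 par_le_lr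
      | inr c₁' =>
        rcases hstepr.2 with hInv | hrp
        · obtain ⟨s0, t0, b0, hre, -, -⟩ := hInv
          rw [hre] at hr1
          simp at hr1
        · rw [hrp, hpe] at hr1
          simp at hr1
    · rw [hp'e] at hle2 hne2
      cases hr2 : r.2 with
      | inl a => rw [hr2] at hle2; exact absurd hle2 par_le_lr
      | inr t₁ =>
        rw [hr2] at hle2 hne2
        have hlt1 : T.toES.lt t₁ t' := ⟨hle2, fun h => hne2 (by rw [h])⟩
        obtain ⟨u, ht₁u, humc⟩ := le_imc_of_lt hT hlt1
        have himcτ := hτc u t' humc (by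
          intro hpair
          rw [Prod.mk.injEq] at hpair
          rw [hpair.2] at hpolT'
          exact Bool.true_eq_false.mp hpolT')
        rw [hτp'] at himcτ
        obtain ⟨c₂, hτu, himcC⟩ := par_imc_inr' (E := B.toES) (F := C.toES) himcτ
        have ht'y : t' ∈ Sum.inr ⁻¹' (Prod.snd '' W' : Set (A.Evt ⊕ T.Evt)) :=
          ⟨p', hp', by rw [hp'e]⟩
        have huy : u ∈ Sum.inr ⁻¹' (Prod.snd '' W' : Set (A.Evt ⊕ T.Evt)) :=
          hy'T.2.2 t' ht'y u humc.1.1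
        obtain ⟨q_u, hq_u, hq_u2⟩ := huy
        have hq_uvis : lmap A B C S σ q_u.1 =
            Sum.map Sum.inl id (Sum.inr c₂ : A.Evt ⊕ C.Evt) := by
          rw [hW'.2.2.1 q_u hq_u, hq_u2]
          simp [rmap, Sum.map, hτu]
        obtain ⟨s_u, a_u, hev, hq_ue, -⟩ | ⟨c₂', t_u, hev, hq_ue, -⟩ :=
          vis_shape hW' hq_u hq_uvis
        · exact absurd hev (by simp)
        rw [(Sum.inr_injective hev.symm : c₂' = c₂)] at hq_ue
        have hq_up' : IRel W' q_u p' :=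
          ⟨hq_u, hp', Or.inr (by
            rw [hq_u2, hp'e]
            exact ⟨humc.1.1, fun h => humc.1.2 (Sum.inr_injective h)⟩)⟩
        by_cases hu : u = t₁
        · subst hu
          have hq_ur : q_u = r :=
            good_snd_inj hσ hW' q_u hq_u r hstepr.1.1 (by rw [hq_u2, hr2])
          rcases hstepr.2 with hInv | hrp
          · obtain ⟨s0, t0, b0, hre, -, -⟩ := hInv
            rw [← hq_ur, hq_ue] at hre
            simp [Prod.ext_iff] at hre
          · rw [← hq_ur] at hrp
            rw [hrp, hpe] at hq_ue
            simp [Prod.ext_iff] at hq_ue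
        · have hrq_u : IRel W' r q_u :=
            ⟨hstepr.1.1, hq_u, Or.inr (by
              rw [hr2, hq_u2]
              exact ⟨ht₁u, fun h => hu (Sum.inr_injective h).symm⟩)⟩
          rcases step1 q_u hq_u (hpRr.tail hrq_u)
              (Relation.ReflTransGen.single hq_up') ⟨Sum.inr c₂, hq_uvis⟩ with heq | heq
          · subst heq
            exact (hnotback r hpRr hrq_u).elim
          · rw [heq, hp'e] at hq_u2
            exact absurd (Sum.inr_injective hq_u2).symm humc.1.2
  -- Case (C, A), positive source : impossible
  · rw [heP] at hpos
    have hC1 : C.pol c₁ = true := by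
      simpa [ESP.par, ESP.dual] using hpos
    have hpolTp : T.pol t_p = true := by
      have h := hτ.2 t_p
      rw [hτp] at h
      rw [← h]; simp [ESP.par, ESP.dual, hC1]
    rcases hstepr₁.1.2.2 with ⟨hle2, hne2⟩ | ⟨hle2, hne2⟩
    · rw [hpe] at hle2 hne2
      cases hr11 : r₁.1 with
      | inl s => rw [hr11] at hle2; exact absurd hle2 par_le_rl
      | inr c₂' =>
        rcases hstepr₁.2 with hInv | hrp'
        · obtain ⟨s0, t0, b0, hre, -, -⟩ := hInv
          rw [hre] at hr11
          simp at hr11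
        · rw [hrp', hp'e] at hr11
          simp at hr11
    · rw [hpe] at hle2 hne2
      cases hr12 : r₁.2 with
      | inl a => rw [hr12] at hle2; exact absurd hle2 par_le_rl
      | inr t₁ =>
        rw [hr12] at hle2 hne2
        have hlt1 : T.toES.lt t_p t₁ := ⟨hle2, fun h => hne2 (by rw [h])⟩
        obtain ⟨v, hvimc, hvt₁⟩ := imc_le_of_lt hT hlt1
        have himcτ := hτc t_p v hvimc (by
          intro hpair
          rw [Prod.mk.injEq] at hpair
          rw [hpair.1] at hpolTp
          exact Bool.false_ne_true hpolTp)
        rw [hτp] at himcτ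
        obtain ⟨c₂, hτv, himcC⟩ := par_imc_inr (E := B.toES) (F := C.toES) himcτ
        have ht₁y : t₁ ∈ Sum.inr ⁻¹' (Prod.snd '' W' : Set (A.Evt ⊕ T.Evt)) :=
          ⟨r₁, hstepr₁.1.2.1, hr12⟩
        have hvy : v ∈ Sum.inr ⁻¹' (Prod.snd '' W' : Set (A.Evt ⊕ T.Evt)) :=
          hy'T.2.2 t₁ ht₁y v hvt₁
        obtain ⟨q_v, hq_v, hq_v2⟩ := hvy
        have hq_vvis : lmap A B C S σ q_v.1 =
            Sum.map Sum.inl id (Sum.inr c₂ : A.Evt ⊕ C.Evt) := by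
          rw [hW'.2.2.1 q_v hq_v, hq_v2]
          simp [rmap, Sum.map, hτv]
        obtain ⟨s_v, a_v, hev, hq_ve, -⟩ | ⟨c₂', t_v, hev, hq_ve, -⟩ :=
          vis_shape hW' hq_v hq_vvis
        · exact absurd hev (by simp)
        rw [(Sum.inr_injective hev.symm : c₂' = c₂)] at hq_ve
        have hpqv : IRel W' p q_v :=
          ⟨hpW', hq_v, Or.inr (by
            rw [hpe, hq_v2]
            exact ⟨hvimc.1.1, fun h => hvimc.1.2 (Sum.inr_injective h)⟩)⟩
        by_cases hv : v = t₁
        · subst hv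
          have hq_vr₁ : q_v = r₁ :=
            good_snd_inj hσ hW' q_v hq_v r₁ hstepr₁.1.2.1 (by rw [hq_v2, hr12])
          rcases hstepr₁.2 with hInv | hrp'
          · obtain ⟨s0, t0, b0, hre, -, -⟩ := hInv
            rw [← hq_vr₁, hq_ve] at hre
            simp [Prod.ext_iff] at hre
          · rw [← hq_vr₁] at hrp'
            rw [hrp', hp'e] at hq_ve
            simp [Prod.ext_iff] at hq_ve
        · have hq_vr₁ : IRel W' q_v r₁ :=
            ⟨hq_v, hstepr₁.1.2.1, Or.inr (by
              rw [hq_v2, hr12]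
              exact ⟨hvt₁, fun h => hv (Sum.inr_injective h)⟩)⟩
          rcases step1 q_v hq_v (Relation.ReflTransGen.single hpqv)
              (Relation.ReflTransGen.head hq_vr₁ hr₁Rp') ⟨Sum.inr c₂, hq_vvis⟩ with heq | heq
          · rw [heq, hpe] at hq_v2
            exact absurd (Sum.inr_injective hq_v2) hvimc.1.2
          · have hcyc : r₁ = q_v := hsec r₁ q_v (heq ▸ hr₁Rp')
              (Relation.ReflTransGen.single hq_vr₁)
            rw [hcyc] at hq_vr₁
            exact absurd hq_vr₁ (hirrefl q_v)
  -- Case (C, A), negative target : impossible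
  · rw [heP'] at hneg
    have hA0 : A.pol a₀' = true := by
      simpa [ESP.par, ESP.dual] using hneg
    have hpolS' : S.pol s' = false := by
      have h := hσ.2 s'
      rw [hσp'] at h
      rw [← h]; simp [ESP.par, ESP.dual, hA0]
    rcases hstepr.1.2.2 with ⟨hle2, hne2⟩ | ⟨hle2, hne2⟩
    · rw [hp'e] at hle2 hne2
      cases hr1 : r.1 with
      | inr c => rw [hr1] at hle2; exact absurd hle2 par_le_rl
      | inl s₁ =>
        rw [hr1] at hle2 hne2
        have hlt1 : S.toES.lt s₁ s' := ⟨hle2, fun h => hne2 (by rw [h])⟩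
        obtain ⟨u, hs₁u, humc⟩ := le_imc_of_lt hS hlt1
        have himcσ := hσc u s' humc (by
          intro hpair
          rw [Prod.mk.injEq] at hpair
          rw [hpair.2] at hpolS'
          exact Bool.true_eq_false.mp hpolS')
        rw [hσp'] at himcσ
        obtain ⟨a₂, hσu, himcA⟩ := par_imc_inl' (E := A.toES) (F := B.toES) himcσ
        have hs'z : s' ∈ Sum.inl ⁻¹' (Prod.fst '' W' : Set (S.Evt ⊕ C.Evt)) :=
          ⟨p', hp', by rw [hp'e]⟩
        have huz : u ∈ Sum.inl ⁻¹' (Prod.fst '' W' : Set (S.Evt ⊕ C.Evt)) :=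
          hz'S.2.2 s' hs'z u humc.1.1
        obtain ⟨q_u, hq_u, hq_u1⟩ := huz
        have hq_uvis : lmap A B C S σ q_u.1 =
            Sum.map Sum.inl id (Sum.inl a₂ : A.Evt ⊕ C.Evt) := by
          rw [hq_u1]; simp [lmap, Sum.map, hσu]
        obtain ⟨s_u, a₂', hev, hq_ue, -⟩ | ⟨c_u, t_u, hev, hq_ue, -⟩ :=
          vis_shape hW' hq_u hq_uvis
        swap
        · exact absurd hev (by simp)
        rw [(Sum.inl_injective hev.symm : a₂' = a₂)] at hq_ue
        have hq_up' : IRel W' q_u p' :=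
          ⟨hq_u, hp', Or.inl (by
            rw [hq_u1, hp'e]
            exact ⟨humc.1.1, fun h => humc.1.2 (Sum.inl_injective h)⟩)⟩
        by_cases hu : u = s₁
        · subst hu
          have hq_ur : q_u = r :=
            good_fst_inj hτ hW' q_u hq_u r hstepr.1.1 (by rw [hq_u1, hr1])
          rcases hstepr.2 with hInv | hrp
          · obtain ⟨s0, t0, b0, hre, -, -⟩ := hInv
            rw [← hq_ur, hq_ue] at hre
            simp [Prod.ext_iff] at hre
          · rw [← hq_ur] at hrp
            rw [hrp, hpe] at hq_ue
            simp [Prod.ext_iff] at hq_ue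
        · have hrq_u : IRel W' r q_u :=
            ⟨hstepr.1.1, hq_u, Or.inl (by
              rw [hr1, hq_u1]
              exact ⟨hs₁u, fun h => hu (Sum.inl_injective h).symm⟩)⟩
          rcases step1 q_u hq_u (hpRr.tail hrq_u)
              (Relation.ReflTransGen.single hq_up') ⟨Sum.inl a₂, hq_uvis⟩ with heq | heq
          · subst heq
            exact (hnotback r hpRr hrq_u).elim
          · rw [heq, hp'e] at hq_u1
            exact absurd (Sum.inl_injective hq_u1).symm humc.1.2
    · rw [hp'e] at hle2 hne2
      cases hr2 : r.2 with
      | inr t => rw [hr2] at hle2; exact absurd hle2 par_le_rl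
      | inl a₂ =>
        rcases hstepr.2 with hInv | hrp
        · obtain ⟨s0, t0, b0, hre, -, -⟩ := hInv
          rw [hre] at hr2
          simp at hr2
        · rw [hrp, hpe] at hr2
          simp at hr2
  -- Case (C, C), positive source
  · rw [heP] at hpos
    have hC1 : C.pol c₁ = true := by
      simpa [ESP.par, ESP.dual] using hpos
    have hpolTp : T.pol t_p = true := by
      have h := hτ.2 t_p
      rw [hτp] at h
      rw [← h]; simp [ESP.par, ESP.dual, hC1]
    rcases hstepr₁.1.2.2 with ⟨hle2, hne2⟩ | ⟨hle2, hne2⟩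
    · -- E-step out of p : lands on a visible C point
      rw [hpe] at hle2 hne2
      cases hr11 : r₁.1 with
      | inl s => rw [hr11] at hle2; exact absurd hle2 par_le_rl
      | inr c₂' =>
        rw [hr11] at hle2 hne2
        rcases hstepr₁.2 with hInv | hrp'
        · obtain ⟨s0, t0, b0, hre, -, -⟩ := hInv
          rw [hre] at hr11
          simp at hr11
        · rw [hrp', hp'e] at hr11
          simp only at hr11
          have hc₀₂ : c₀' = c₂' := Sum.inr_injective hr11
          subst hc₀₂
          exact par_imc_of_rr (immC _ _ _ _ hpe hp'e
            ⟨hle2, fun h => hne2 (by rw [h])⟩)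
    · -- F-step out of p
      rw [hpe] at hle2 hne2
      cases hr12 : r₁.2 with
      | inl a => rw [hr12] at hle2; exact absurd hle2 par_le_rl
      | inr t₁ =>
        rw [hr12] at hle2 hne2
        have hlt1 : T.toES.lt t_p t₁ := ⟨hle2, fun h => hne2 (by rw [h])⟩
        obtain ⟨v, hvimc, hvt₁⟩ := imc_le_of_lt hT hlt1
        have himcτ := hτc t_p v hvimc (by
          intro hpair
          rw [Prod.mk.injEq] at hpair
          rw [hpair.1] at hpolTp
          exact Bool.false_ne_true hpolTp)
        rw [hτp] at himcτ
        obtain ⟨c₂, hτv, himcC⟩ := par_imc_inr (E := B.toES) (F := C.toES) himcτ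
        have ht₁y : t₁ ∈ Sum.inr ⁻¹' (Prod.snd '' W' : Set (A.Evt ⊕ T.Evt)) :=
          ⟨r₁, hstepr₁.1.2.1, hr12⟩
        have hvy : v ∈ Sum.inr ⁻¹' (Prod.snd '' W' : Set (A.Evt ⊕ T.Evt)) :=
          hy'T.2.2 t₁ ht₁y v hvt₁
        obtain ⟨q_v, hq_v, hq_v2⟩ := hvy
        have hq_vvis : lmap A B C S σ q_v.1 =
            Sum.map Sum.inl id (Sum.inr c₂ : A.Evt ⊕ C.Evt) := by
          rw [hW'.2.2.1 q_v hq_v, hq_v2]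
          simp [rmap, Sum.map, hτv]
        obtain ⟨s_v, a_v, hev, hq_ve, -⟩ | ⟨c₂', t_v, hev, hq_ve, -⟩ :=
          vis_shape hW' hq_v hq_vvis
        · exact absurd hev (by simp)
        rw [(Sum.inr_injective hev.symm : c₂' = c₂)] at hq_ve
        have hpqv : IRel W' p q_v :=
          ⟨hpW', hq_v, Or.inr (by
            rw [hpe, hq_v2]
            exact ⟨hvimc.1.1, fun h => hvimc.1.2 (Sum.inr_injective h)⟩)⟩
        by_cases hv : v = t₁
        · subst hv
          have hq_vr₁ : q_v = r₁ :=
            good_snd_inj hσ hW' q_v hq_v r₁ hstepr₁.1.2.1 (by rw [hq_v2, hr12])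
          rcases hstepr₁.2 with hInv | hrp'
          · obtain ⟨s0, t0, b0, hre, -, -⟩ := hInv
            rw [← hq_vr₁, hq_ve] at hre
            simp [Prod.ext_iff] at hre
          · rw [← hq_vr₁] at hrp'
            rw [hrp', hp'e] at hq_ve
            rw [Prod.ext_iff] at hq_ve
            have ha : c₀' = c₂ := Sum.inr_injective hq_ve.1
            subst ha
            exact par_imc_of_rr (immC _ _ _ _ hpe hp'e himcC.1)
        · have hq_vr₁ : IRel W' q_v r₁ :=
            ⟨hq_v, hstepr₁.1.2.1, Or.inr (by
              rw [hq_v2, hr12]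
              exact ⟨hvt₁, fun h => hv (Sum.inr_injective h)⟩)⟩
          rcases step1 q_v hq_v (Relation.ReflTransGen.single hpqv)
              (Relation.ReflTransGen.head hq_vr₁ hr₁Rp') ⟨Sum.inr c₂, hq_vvis⟩ with heq | heq
          · rw [heq, hpe] at hq_v2
            exact absurd (Sum.inr_injective hq_v2) hvimc.1.2
          · have hcyc : r₁ = q_v := hsec r₁ q_v (heq ▸ hr₁Rp')
              (Relation.ReflTransGen.single hq_vr₁)
            rw [hcyc] at hq_vr₁
            exact absurd hq_vr₁ (hirrefl q_v)
  -- Case (C, C), negative target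
  · rw [heP'] at hneg
    have hC0 : C.pol c₀' = false := by
      simpa [ESP.par, ESP.dual] using hneg
    have hpolT' : T.pol t' = false := by
      have h := hτ.2 t'
      rw [hτp'] at h
      rw [← h]; simp [ESP.par, ESP.dual, hC0]
    rcases hstepr.1.2.2 with ⟨hle2, hne2⟩ | ⟨hle2, hne2⟩
    · -- E-step into p'
      rw [hp'e] at hle2 hne2
      cases hr1 : r.1 with
      | inl s => rw [hr1] at hle2; exact absurd hle2 par_le_lr
      | inr c₁' =>
        rw [hr1] at hle2 hne2
        rcases hstepr.2 with hInv | hrp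
        · obtain ⟨s0, t0, b0, hre, -, -⟩ := hInv
          rw [hre] at hr1
          simp at hr1
        · rw [hrp, hpe] at hr1
          simp only at hr1
          have hc : c₁ = c₁' := Sum.inr_injective hr1
          subst hc
          exact par_imc_of_rr (immC _ _ _ _ hpe hp'e
            ⟨hle2, fun h => hne2 (by rw [h])⟩)
    · -- F-step into p'
      rw [hp'e] at hle2 hne2
      cases hr2 : r.2 with
      | inl a => rw [hr2] at hle2; exact absurd hle2 par_le_lr
      | inr t₁ =>
        rw [hr2] at hle2 hne2
        have hlt1 : T.toES.lt t₁ t' := ⟨hle2, fun h => hne2 (by rw [h])⟩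
        obtain ⟨u, ht₁u, humc⟩ := le_imc_of_lt hT hlt1
        have himcτ := hτc u t' humc (by
          intro hpair
          rw [Prod.mk.injEq] at hpair
          rw [hpair.2] at hpolT'
          exact Bool.true_eq_false.mp hpolT')
        rw [hτp'] at himcτ
        obtain ⟨c₂, hτu, himcC⟩ := par_imc_inr' (E := B.toES) (F := C.toES) himcτ
        have ht'y : t' ∈ Sum.inr ⁻¹' (Prod.snd '' W' : Set (A.Evt ⊕ T.Evt)) :=
          ⟨p', hp', by rw [hp'e]⟩
        have huy : u ∈ Sum.inr ⁻¹' (Prod.snd '' W' : Set (A.Evt ⊕ T.Evt)) :=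
          hy'T.2.2 t' ht'y u humc.1.1
        obtain ⟨q_u, hq_u, hq_u2⟩ := huy
        have hq_uvis : lmap A B C S σ q_u.1 =
            Sum.map Sum.inl id (Sum.inr c₂ : A.Evt ⊕ C.Evt) := by
          rw [hW'.2.2.1 q_u hq_u, hq_u2]
          simp [rmap, Sum.map, hτu]
        obtain ⟨s_u, a_u, hev, hq_ue, -⟩ | ⟨c₂', t_u, hev, hq_ue, -⟩ :=
          vis_shape hW' hq_u hq_uvis
        · exact absurd hev (by simp)
        rw [(Sum.inr_injective hev.symm : c₂' = c₂)] at hq_ue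
        have hq_up' : IRel W' q_u p' :=
          ⟨hq_u, hp', Or.inr (by
            rw [hq_u2, hp'e]
            exact ⟨humc.1.1, fun h => humc.1.2 (Sum.inr_injective h)⟩)⟩
        by_cases hu : u = t₁
        · subst hu
          have hq_ur : q_u = r :=
            good_snd_inj hσ hW' q_u hq_u r hstepr.1.1 (by rw [hq_u2, hr2])
          rcases hstepr.2 with hInv | hrp
          · obtain ⟨s0, t0, b0, hre, -, -⟩ := hInv
            rw [← hq_ur, hq_ue] at hre
            simp [Prod.ext_iff] at hre
          · rw [← hq_ur] at hrp
            rw [hrp, hpe] at hq_ue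
            rw [Prod.ext_iff] at hq_ue
            have ha : c₁ = c₂ := Sum.inr_injective hq_ue.1
            subst ha
            exact par_imc_of_rr (immC _ _ _ _ hpe hp'e himcC.1)
        · have hrq_u : IRel W' r q_u :=
            ⟨hstepr.1.1, hq_u, Or.inr (by
              rw [hr2, hq_u2]
              exact ⟨ht₁u, fun h => hu (Sum.inr_injective h).symm⟩)⟩
          rcases step1 q_u hq_u (hpRr.tail hrq_u)
              (Relation.ReflTransGen.single hq_up') ⟨Sum.inr c₂, hq_uvis⟩ with heq | heq
          · subst heq
            exact (hnotback r hpRr hrq_u).elim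
          · rw [heq, hp'e] at hq_u2
            exact absurd (Sum.inr_injective hq_u2).symm humc.1.2

end Court
end CompAux

/-- the composition `τ ⊙ σ` of receptive and courteous
pre-strategies (i.e. strategies) `σ : S → A^⊥ ∥ B` and `τ : T → B^⊥ ∥ C` is a
receptive and courteous pre-strategy (i.e. a strategy) on `A^⊥ ∥ C`. -/
theorem composition_preserves_strategies
    (A B C S T : ESP) (hA : A.toES.IsES) (hB : B.toES.IsES) (hC : C.toES.IsES)
    (hS : S.toES.IsES) (hT : T.toES.IsES)
    (σ : S.Evt → A.Evt ⊕ B.Evt) (τ : T.Evt → B.Evt ⊕ C.Evt)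
    (hσ : IsPreStrategy S (A.dual.par B) σ)
    (hτ : IsPreStrategy T (B.dual.par C) τ)
    (hσr : Receptive S (A.dual.par B) σ) (hσc : Courteous S (A.dual.par B) σ)
    (hτr : Receptive T (B.dual.par C) τ) (hτc : Courteous T (B.dual.par C) τ) :
    IsPreStrategy (compESP A B C S T σ τ) (A.dual.par C)
      (compLabel A B C S T σ τ) ∧
    Receptive (compESP A B C S T σ τ) (A.dual.par C)
      (compLabel A B C S T σ τ) ∧
    Courteous (compESP A B C S T σ τ) (A.dual.par C)
      (compLabel A B C S T σ τ) := by
  exact ⟨CompAux.comp_prestrategy hσ hτ,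
    CompAux.comp_receptive hA hC hS hT hσ hτ hσr hσc hτr hτc,
    CompAux.comp_courteous hA hC hS hT hσ hτ hσc hτc⟩
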